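/- arXiv:1909.04554 — 13 statements merged into one kernel-verified Lean document; each statement's English description precedes it below -/
import Mathlib

section
/- For all v, d ∈ V with v ≠ d, exactly one of the seven non-empty cases of the routing function R1 applies, so R1(v, d) is a singleton; moreover R1(v, d) = ∅ if and only if v = d. Hence R1 is a total deterministic routing function on the 3D mesh topology digraph. -/
/-- Routers are triples `(x, y, z)` of natural numbers. -/
abbrev Vtx : Type := ℕ × ℕ × ℕ

/-- Membership in the vertex set `V` of the 3D mesh topology digraph with `L` layers,
`m z` rows and `n z` columns in layer `z`. -/
def memV (L : ℕ) (m n : ℕ → ℕ) (v : Vtx) : Prop :=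
  1 ≤ v.1 ∧ v.1 ≤ n v.2.2 ∧ 1 ≤ v.2.1 ∧ v.2.1 ≤ m v.2.2 ∧ 1 ≤ v.2.2 ∧ v.2.2 ≤ L

/-- Neighbor of `v` to the east: `(x+1, y, z)`. -/
def eastN (v : Vtx) : Vtx := (v.1 + 1, v.2.1, v.2.2)
/-- Neighbor of `v` to the west: `(x-1, y, z)`. -/
def westN (v : Vtx) : Vtx := (v.1 - 1, v.2.1, v.2.2)
/-- Neighbor of `v` to the north: `(x, y-1, z)`. -/
def northN (v : Vtx) : Vtx := (v.1, v.2.1 - 1, v.2.2)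
/-- Neighbor of `v` to the south: `(x, y+1, z)`. -/
def southN (v : Vtx) : Vtx := (v.1, v.2.1 + 1, v.2.2)
/-- Neighbor of `v` upwards: `(x, y, z-1)`. -/
def upN (v : Vtx) : Vtx := (v.1, v.2.1, v.2.2 - 1)
/-- Neighbor of `v` downwards: `(x, y, z+1)`. -/
def downN (v : Vtx) : Vtx := (v.1, v.2.1, v.2.2 + 1)

/-- The arc set `A` of the topology digraph: both endpoints lie in `V` and the head is a
unit neighbor of the tail (east, west, south, north, down or up). -/
def inA (L : ℕ) (m n : ℕ → ℕ) (a : Vtx × Vtx) : Prop :=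
  memV L m n a.1 ∧ memV L m n a.2 ∧
    ((a.2.1 = a.1.1 + 1 ∧ a.2.2.1 = a.1.2.1 ∧ a.2.2.2 = a.1.2.2) ∨   -- east
     (a.2.1 + 1 = a.1.1 ∧ a.2.2.1 = a.1.2.1 ∧ a.2.2.2 = a.1.2.2) ∨   -- west
     (a.2.1 = a.1.1 ∧ a.2.2.1 = a.1.2.1 + 1 ∧ a.2.2.2 = a.1.2.2) ∨   -- south
     (a.2.1 = a.1.1 ∧ a.2.2.1 + 1 = a.1.2.1 ∧ a.2.2.2 = a.1.2.2) ∨   -- north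
     (a.2.1 = a.1.1 ∧ a.2.2.1 = a.1.2.1 ∧ a.2.2.2 = a.1.2.2 + 1) ∨   -- down
     (a.2.1 = a.1.1 ∧ a.2.2.1 = a.1.2.1 ∧ a.2.2.2 + 1 = a.1.2.2))    -- up

/-- An arc has direction north: same x, smaller y, same z. -/
def dirNorth (a : Vtx × Vtx) : Prop :=
  a.2.1 = a.1.1 ∧ a.2.2.1 < a.1.2.1 ∧ a.2.2.2 = a.1.2.2
/-- An arc has direction east: larger x, same y, same z. -/
def dirEast (a : Vtx × Vtx) : Prop :=
  a.1.1 < a.2.1 ∧ a.2.2.1 = a.1.2.1 ∧ a.2.2.2 = a.1.2.2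
/-- An arc has direction south: same x, larger y, same z. -/
def dirSouth (a : Vtx × Vtx) : Prop :=
  a.2.1 = a.1.1 ∧ a.1.2.1 < a.2.2.1 ∧ a.2.2.2 = a.1.2.2
/-- An arc has direction west: smaller x, same y, same z. -/
def dirWest (a : Vtx × Vtx) : Prop :=
  a.2.1 < a.1.1 ∧ a.2.2.1 = a.1.2.1 ∧ a.2.2.2 = a.1.2.2
/-- An arc has direction up: smaller z. -/
def dirUp (a : Vtx × Vtx) : Prop := a.2.2.2 < a.1.2.2
/-- An arc has direction down: larger z. -/
def dirDown (a : Vtx × Vtx) : Prop := a.1.2.2 < a.2.2.2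

/-- Arc `b` is direct dependent on arc `a` (according to routing function `R`):
both are arcs of the topology, the tail of `b` is the head of `a`, and there is a
destination `d ∈ V` such that `a ∈ R(tail a, d)` and `b ∈ R(tail b, d)`. -/
def directDep (L : ℕ) (m n : ℕ → ℕ) (R : Vtx → Vtx → Set (Vtx × Vtx))
    (a b : Vtx × Vtx) : Prop :=
  inA L m n a ∧ inA L m n b ∧ b.1 = a.2 ∧
    ∃ d : Vtx, memV L m n d ∧ a ∈ R a.1 d ∧ b ∈ R b.1 d

/-- `(f, g)` is a possible turn according to `R`. -/
def possibleTurn (L : ℕ) (m n : ℕ → ℕ) (R : Vtx → Vtx → Set (Vtx × Vtx))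
    (f g : Vtx × Vtx → Prop) : Prop :=
  ∃ a b : Vtx × Vtx, f a ∧ g b ∧ directDep L m n R a b

/-- The routing function `R1` (Z⁺XYZ⁻ routing). -/
def R1 (v d : Vtx) : Set (Vtx × Vtx) :=
  {a | a.1 = v ∧
    ((v.1 = d.1 ∧ d.2.1 < v.2.1 ∧ d.2.2 ≤ v.2.2 ∧ a.2 = northN v) ∨
     (v.1 < d.1 ∧ d.2.2 ≤ v.2.2 ∧ a.2 = eastN v) ∨
     (v.1 = d.1 ∧ v.2.1 < d.2.1 ∧ d.2.2 ≤ v.2.2 ∧ a.2 = southN v) ∨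
     (d.1 < v.1 ∧ d.2.2 ≤ v.2.2 ∧ a.2 = westN v) ∨
     (v.1 = d.1 ∧ v.2.1 = d.2.1 ∧ d.2.2 < v.2.2 ∧ a.2 = upN v) ∨
     (v.2.2 < d.2.2 ∧ a.2 = downN v))}

lemma R1_down (vx vy vz dx dy dz : ℕ) (h : vz < dz) :
    R1 (vx,vy,vz) (dx,dy,dz) = {((vx,vy,vz), downN (vx,vy,vz))} := by
  ext ⟨⟨x1, y1, z1⟩, ⟨x2, y2, z2⟩⟩
  simp only [R1, Set.mem_setOf_eq, Set.mem_singleton_iff, Set.mem_empty_iff_false, eastN, westN, northN, southN, upN, downN, Prod.mk.injEq, iff_false]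
  omega

lemma R1_east (vx vy vz dx dy dz : ℕ) (h1 : dz ≤ vz) (h2 : vx < dx) :
    R1 (vx,vy,vz) (dx,dy,dz) = {((vx,vy,vz), eastN (vx,vy,vz))} := by
  ext ⟨⟨x1, y1, z1⟩, ⟨x2, y2, z2⟩⟩
  simp only [R1, Set.mem_setOf_eq, Set.mem_singleton_iff, Set.mem_empty_iff_false, eastN, westN, northN, southN, upN, downN, Prod.mk.injEq, iff_false]
  omega

lemma R1_west (vx vy vz dx dy dz : ℕ) (h1 : dz ≤ vz) (h2 : dx < vx) :
    R1 (vx,vy,vz) (dx,dy,dz) = {((vx,vy,vz), westN (vx,vy,vz))} := by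
  ext ⟨⟨x1, y1, z1⟩, ⟨x2, y2, z2⟩⟩
  simp only [R1, Set.mem_setOf_eq, Set.mem_singleton_iff, Set.mem_empty_iff_false, eastN, westN, northN, southN, upN, downN, Prod.mk.injEq, iff_false]
  omega

lemma R1_south (vx vy vz dx dy dz : ℕ) (h1 : dz ≤ vz) (h2 : vx = dx) (h3 : vy < dy) :
    R1 (vx,vy,vz) (dx,dy,dz) = {((vx,vy,vz), southN (vx,vy,vz))} := by
  ext ⟨⟨x1, y1, z1⟩, ⟨x2, y2, z2⟩⟩
  simp only [R1, Set.mem_setOf_eq, Set.mem_singleton_iff, Set.mem_empty_iff_false, eastN, westN, northN, southN, upN, downN, Prod.mk.injEq, iff_false]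
  omega

lemma R1_north (vx vy vz dx dy dz : ℕ) (h1 : dz ≤ vz) (h2 : vx = dx) (h3 : dy < vy) :
    R1 (vx,vy,vz) (dx,dy,dz) = {((vx,vy,vz), northN (vx,vy,vz))} := by
  ext ⟨⟨x1, y1, z1⟩, ⟨x2, y2, z2⟩⟩
  simp only [R1, Set.mem_setOf_eq, Set.mem_singleton_iff, Set.mem_empty_iff_false, eastN, westN, northN, southN, upN, downN, Prod.mk.injEq, iff_false]
  omega

lemma R1_up (vx vy vz dx dy dz : ℕ) (h1 : dz < vz) (h2 : vx = dx) (h3 : vy = dy) :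
    R1 (vx,vy,vz) (dx,dy,dz) = {((vx,vy,vz), upN (vx,vy,vz))} := by
  ext ⟨⟨x1, y1, z1⟩, ⟨x2, y2, z2⟩⟩
  simp only [R1, Set.mem_setOf_eq, Set.mem_singleton_iff, Set.mem_empty_iff_false, eastN, westN, northN, southN, upN, downN, Prod.mk.injEq, iff_false]
  omega

lemma R1_self_empty (v : Vtx) : R1 v v = ∅ := by
  obtain ⟨vx, vy, vz⟩ := v
  ext ⟨⟨x1, y1, z1⟩, ⟨x2, y2, z2⟩⟩
  simp only [R1, Set.mem_setOf_eq, Set.mem_singleton_iff, Set.mem_empty_iff_false, eastN, westN, northN, southN, upN, downN, Prod.mk.injEq, iff_false]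
  omega

lemma R1_exists_singleton (v d : Vtx) (hne : v ≠ d) :
    ∃ w : Vtx, R1 v d = {(v, w)} := by
  obtain ⟨vx, vy, vz⟩ := v
  obtain ⟨dx, dy, dz⟩ := d
  have hne' : vx ≠ dx ∨ vy ≠ dy ∨ vz ≠ dz := by
    by_contra h
    push_neg at h
    exact hne (by simp [Prod.ext_iff, h.1, h.2.1, h.2.2])
  rcases lt_trichotomy vz dz with h1 | h1 | h1
  · exact ⟨_, R1_down vx vy vz dx dy dz h1⟩
  · rcases lt_trichotomy vx dx with h2 | h2 | h2
    · exact ⟨_, R1_east vx vy vz dx dy dz h1.ge h2⟩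
    · rcases lt_trichotomy vy dy with h3 | h3 | h3
      · exact ⟨_, R1_south vx vy vz dx dy dz h1.ge h2 h3⟩
      · omega
      · exact ⟨_, R1_north vx vy vz dx dy dz h1.ge h2 h3⟩
    · exact ⟨_, R1_west vx vy vz dx dy dz h1.ge h2⟩
  · rcases lt_trichotomy vx dx with h2 | h2 | h2
    · exact ⟨_, R1_east vx vy vz dx dy dz h1.le h2⟩
    · rcases lt_trichotomy vy dy with h3 | h3 | h3
      · exact ⟨_, R1_south vx vy vz dx dy dz h1.le h2 h3⟩
      · exact ⟨_, R1_up vx vy vz dx dy dz h1 h2 h3⟩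
      · exact ⟨_, R1_north vx vy vz dx dy dz h1.le h2 h3⟩
    · exact ⟨_, R1_west vx vy vz dx dy dz h1.le h2⟩

/-- For routers `v ≠ d` exactly one case of `R1` applies, so `R1 v d` is a
singleton `{(v, w)}`; moreover `R1 v d = ∅` iff `v = d`. -/
theorem R1_total_deterministic (L : ℕ) (m n : ℕ → ℕ) (hL : 2 ≤ L)
    (hm2 : ∀ z, 1 ≤ z → z ≤ L → 2 ≤ m z)
    (hn2 : ∀ z, 1 ≤ z → z ≤ L → 2 ≤ n z)
    (hmMono : ∀ z, 1 ≤ z → z < L → m z ≤ m (z + 1))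
    (hnMono : ∀ z, 1 ≤ z → z < L → n z ≤ n (z + 1))
    (v d : Vtx) (hv : memV L m n v) (hd : memV L m n d) :
    (v ≠ d → ∃ w : Vtx, R1 v d = {(v, w)}) ∧ (R1 v d = ∅ ↔ v = d) := by
  refine ⟨R1_exists_singleton v d, ?_, fun h => h ▸ R1_self_empty v⟩
  intro h
  by_contra hne
  obtain ⟨w, hw⟩ := R1_exists_singleton v d hne
  have : (v, w) ∈ R1 v d := hw ▸ rfl
  rw [h] at this
  exact this
end

section
/- (Lemma 2) For every v, d ∈ V with v ≠ d, the arc prescribed by the routing function R1(v, d) exists in A; that is, whenever R1 returns a direction at v toward d, the neighboring router of v in that direction lies in V (in particular, the nonexistent links at the outer border of the 3D mesh and the missing up links above coarser layers are never required by R1). -/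
lemma stepMono_le {L : ℕ} {f : ℕ → ℕ} (h : ∀ z, 1 ≤ z → z < L → f z ≤ f (z + 1)) :
    ∀ a b, 1 ≤ a → a ≤ b → b ≤ L → f a ≤ f b := by
  intro a b ha hab hbL
  induction b with
  | zero => omega
  | succ k ih =>
    rcases Nat.eq_or_lt_of_le hab with rfl | hlt
    · exact le_refl _
    · exact le_trans (ih (by omega) (by omega)) (h k (by omega) (by omega))

/-- Lemma 2: whenever `R1` returns a direction at `v` toward `d`, the prescribed
arc exists in the arc set `A` of the 3D mesh topology digraph. -/
theorem R1_arcs_exist (L : ℕ) (m n : ℕ → ℕ) (hL : 2 ≤ L)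
    (hm2 : ∀ z, 1 ≤ z → z ≤ L → 2 ≤ m z)
    (hn2 : ∀ z, 1 ≤ z → z ≤ L → 2 ≤ n z)
    (hmMono : ∀ z, 1 ≤ z → z < L → m z ≤ m (z + 1))
    (hnMono : ∀ z, 1 ≤ z → z < L → n z ≤ n (z + 1))
    (v d : Vtx) (hv : memV L m n v) (hd : memV L m n d) (hvd : v ≠ d) :
    ∀ a ∈ R1 v d, inA L m n a := by
  have hnm := stepMono_le hnMono
  have hmm := stepMono_le hmMono
  rintro ⟨p, q⟩ ⟨rfl, h⟩
  obtain ⟨x, y, z⟩ := p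
  obtain ⟨dx, dy, dz⟩ := d
  obtain ⟨hvx1, hvxn, hvy1, hvym, hvz1, hvzL⟩ := hv
  obtain ⟨hdx1, hdxn, hdy1, hdym, hdz1, hdzL⟩ := hd
  simp only [memV] at *
  rcases h with ⟨hx, hy, hz, hq⟩ | ⟨hx, hz, hq⟩ | ⟨hx, hy, hz, hq⟩ | ⟨hx, hz, hq⟩ |
      ⟨hx, hy, hz, hq⟩ | ⟨hz, hq⟩ <;> subst hq
  · simp only [inA, memV, northN, eastN, southN, westN, upN, downN, Prod.fst, Prod.snd, and_true, true_and, or_true, true_or] <;> omega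
  · have h1 := hnm dz z hdz1 hz hvzL
    simp only [inA, memV, northN, eastN, southN, westN, upN, downN, Prod.fst, Prod.snd, and_true, true_and, or_true, true_or] <;> omega
  · have h1 := hmm dz z hdz1 hz hvzL
    simp only [inA, memV, northN, eastN, southN, westN, upN, downN, Prod.fst, Prod.snd, and_true, true_and, or_true, true_or] <;> omega
  · simp only [inA, memV, northN, eastN, southN, westN, upN, downN, Prod.fst, Prod.snd, and_true, true_and, or_true, true_or] <;> omega
  · have h1 := hnm dz (z - 1) hdz1 (by omega) (by omega)
    have h2 := hmm dz (z - 1) hdz1 (by omega) (by omega)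
    simp only [inA, memV, northN, eastN, southN, westN, upN, downN, Prod.fst, Prod.snd, and_true, true_and, or_true, true_or] <;> omega
  · have h1 := hnMono z hvz1 (by omega)
    have h2 := hmMono z hvz1 (by omega)
    simp only [inA, memV, northN, eastN, southN, westN, upN, downN, Prod.fst, Prod.snd, and_true, true_and, or_true, true_or] <;> omega
end

section
/- If v, d ∈ V with v ≠ d and R1(v, d) = {(v, w)}, then the Manhattan distance to the destination decreases by exactly one: |w_x − d_x| + |w_y − d_y| + |w_z − d_z| = |v_x − d_x| + |v_y − d_y| + |v_z − d_z| − 1. -/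
/-- Each step of `R1` decreases the Manhattan distance to the destination by
exactly one. -/
theorem R1_step_decreases_manhattan (L : ℕ) (m n : ℕ → ℕ) (hL : 2 ≤ L)
    (hm2 : ∀ z, 1 ≤ z → z ≤ L → 2 ≤ m z)
    (hn2 : ∀ z, 1 ≤ z → z ≤ L → 2 ≤ n z)
    (hmMono : ∀ z, 1 ≤ z → z < L → m z ≤ m (z + 1))
    (hnMono : ∀ z, 1 ≤ z → z < L → n z ≤ n (z + 1))
    (v d : Vtx) (hv : memV L m n v) (hd : memV L m n d) (hvd : v ≠ d)
    (w : Vtx) (hw : R1 v d = {(v, w)}) :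
    |(w.1 : ℤ) - (d.1 : ℤ)| + |(w.2.1 : ℤ) - (d.2.1 : ℤ)| + |(w.2.2 : ℤ) - (d.2.2 : ℤ)|
      = |(v.1 : ℤ) - (d.1 : ℤ)| + |(v.2.1 : ℤ) - (d.2.1 : ℤ)|
          + |(v.2.2 : ℤ) - (d.2.2 : ℤ)| - 1 := by
  have hmem : (v, w) ∈ R1 v d := by rw [hw]; rfl
  obtain ⟨-, h⟩ := hmem
  obtain ⟨hx1, hx2, hy1, hy2, hz1, hz2⟩ := hv
  rcases h with ⟨h1, h2, h3, h4⟩ | ⟨h1, h2, h3⟩ | ⟨h1, h2, h3, h4⟩ | ⟨h1, h2, h3⟩ |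
      ⟨h1, h2, h3, h4⟩ | ⟨h1, h2⟩ <;>
    simp only [show ((v, w).2 : Vtx) = w from rfl] at * <;>
    subst_vars <;>
    simp only [northN, eastN, southN, westN, upN, downN, Int.abs_eq_natAbs] <;>
    omega
end

section
/- (Lemma 3) The routing function R1 is connected: for every pair of routers s, d ∈ V there exists a directed path v_1 = s, v_2, …, v_k = d in the 3D mesh topology digraph T such that each arc (v_i, v_{i+1}) belongs to R1(v_i, d). -/
private lemma mono_range (L : ℕ) (f : ℕ → ℕ)
    (hf : ∀ z, 1 ≤ z → z < L → f z ≤ f (z + 1)) :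
    ∀ z1 z2, 1 ≤ z1 → z1 ≤ z2 → z2 ≤ L → f z1 ≤ f z2 := by
  intro z1 z2 h1 h12
  induction z2, h12 using Nat.le_induction with
  | base => intro _; exact le_rfl
  | succ k hk ih =>
    intro hkL
    exact le_trans (ih (by omega)) (hf k (by omega) (by omega))

private lemma cons_path (L : ℕ) (m n : ℕ → ℕ) (s s' d : Vtx)
    (ha : inA L m n (s, s') ∧ (s, s') ∈ R1 s d)
    (h : ∃ (k : ℕ) (p : ℕ → Vtx), p 0 = s' ∧ p k = d ∧
      ∀ i < k, inA L m n (p i, p (i + 1)) ∧ (p i, p (i + 1)) ∈ R1 (p i) d) :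
    ∃ (k : ℕ) (p : ℕ → Vtx), p 0 = s ∧ p k = d ∧
      ∀ i < k, inA L m n (p i, p (i + 1)) ∧ (p i, p (i + 1)) ∈ R1 (p i) d := by
  obtain ⟨k, p, hp0, hpk, hp⟩ := h
  refine ⟨k + 1, fun i => match i with | 0 => s | i + 1 => p i, rfl, hpk, ?_⟩
  intro i hi
  match i with
  | 0 => simpa [hp0] using ha
  | j + 1 => exact hp j (by omega)

/-- Lemma 3: the routing function `R1` is connected: for every pair of routers
`s, d ∈ V` there is a directed path in the topology digraph from `s` to `d`
each of whose arcs is delivered by `R1` (toward `d`). -/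
theorem R1_connected (L : ℕ) (m n : ℕ → ℕ) (hL : 2 ≤ L)
    (hm2 : ∀ z, 1 ≤ z → z ≤ L → 2 ≤ m z)
    (hn2 : ∀ z, 1 ≤ z → z ≤ L → 2 ≤ n z)
    (hmMono : ∀ z, 1 ≤ z → z < L → m z ≤ m (z + 1))
    (hnMono : ∀ z, 1 ≤ z → z < L → n z ≤ n (z + 1))
    (s d : Vtx) (hs : memV L m n s) (hd : memV L m n d) :
    ∃ (k : ℕ) (p : ℕ → Vtx), p 0 = s ∧ p k = d ∧
      ∀ i < k, inA L m n (p i, p (i + 1)) ∧ (p i, p (i + 1)) ∈ R1 (p i) d := by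
  have nmono := mono_range L n hnMono
  have mmono := mono_range L m hmMono
  obtain ⟨dx, dy, dz⟩ := d
  obtain ⟨hdx1, hdxn, hdy1, hdym, hdz1, hdzL⟩ := hd
  dsimp only at hdx1 hdxn hdy1 hdym hdz1 hdzL
  suffices H : ∀ N s, memV L m n s →
      (s.1 - dx) + (dx - s.1) + (s.2.1 - dy) + (dy - s.2.1) +
        (s.2.2 - dz) + (dz - s.2.2) ≤ N →
      ∃ (k : ℕ) (p : ℕ → Vtx), p 0 = s ∧ p k = (dx, dy, dz) ∧
        ∀ i < k, inA L m n (p i, p (i + 1)) ∧ (p i, p (i + 1)) ∈ R1 (p i) (dx, dy, dz) by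
    exact H _ s hs le_rfl
  intro N
  induction N with
  | zero =>
    intro s hsmem hdist
    obtain ⟨sx, sy, sz⟩ := s
    dsimp only at hdist
    have h1 : sx = dx := by omega
    have h2 : sy = dy := by omega
    have h3 : sz = dz := by omega
    subst h1 h2 h3
    exact ⟨0, fun _ => (sx, sy, sz), rfl, rfl, fun i hi => absurd hi (by omega)⟩
  | succ N ih =>
    intro s hsmem hdist
    obtain ⟨sx, sy, sz⟩ := s
    obtain ⟨hsx1, hsxn, hsy1, hsym, hsz1, hszL⟩ := hsmem
    dsimp only at hsx1 hsxn hsy1 hsym hsz1 hszL hdist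
    by_cases hsd : sx = dx ∧ sy = dy ∧ sz = dz
    · obtain ⟨h1, h2, h3⟩ := hsd
      subst h1 h2 h3
      exact ⟨0, fun _ => (sx, sy, sz), rfl, rfl, fun i hi => absurd hi (by omega)⟩
    rcases lt_or_ge sz dz with hz | hz
    · -- go down
      have hmem : memV L m n (sx, sy, sz + 1) := by
        have h1 : n sz ≤ n (sz + 1) := hnMono _ hsz1 (by omega)
        have h2 : m sz ≤ m (sz + 1) := hmMono _ hsz1 (by omega)
        refine ⟨?_, ?_, ?_, ?_, ?_, ?_⟩ <;> dsimp only <;> omega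
      refine cons_path L m n (sx, sy, sz) (sx, sy, sz + 1) (dx, dy, dz)
        ⟨⟨⟨hsx1, hsxn, hsy1, hsym, hsz1, hszL⟩, hmem,
          Or.inr (Or.inr (Or.inr (Or.inr (Or.inl ⟨rfl, rfl, rfl⟩))))⟩,
          rfl, Or.inr (Or.inr (Or.inr (Or.inr (Or.inr ⟨hz, rfl⟩))))⟩
        (ih (sx, sy, sz + 1) hmem (by dsimp only; omega))
    rcases lt_trichotomy sx dx with hx | hx | hx
    · -- east
      have hmem : memV L m n (sx + 1, sy, sz) := by
        have h1 : n dz ≤ n sz := nmono _ _ hdz1 hz hszL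
        refine ⟨?_, ?_, ?_, ?_, ?_, ?_⟩ <;> dsimp only <;> omega
      refine cons_path L m n (sx, sy, sz) (sx + 1, sy, sz) (dx, dy, dz)
        ⟨⟨⟨hsx1, hsxn, hsy1, hsym, hsz1, hszL⟩, hmem, Or.inl ⟨rfl, rfl, rfl⟩⟩,
          rfl, Or.inr (Or.inl ⟨hx, hz, rfl⟩)⟩
        (ih (sx + 1, sy, sz) hmem (by dsimp only; omega))
    · rcases lt_trichotomy sy dy with hy | hy | hy
      · -- south
        have hmem : memV L m n (sx, sy + 1, sz) := by
          have h1 : m dz ≤ m sz := mmono _ _ hdz1 hz hszL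
          refine ⟨?_, ?_, ?_, ?_, ?_, ?_⟩ <;> dsimp only <;> omega
        refine cons_path L m n (sx, sy, sz) (sx, sy + 1, sz) (dx, dy, dz)
          ⟨⟨⟨hsx1, hsxn, hsy1, hsym, hsz1, hszL⟩, hmem,
            Or.inr (Or.inr (Or.inl ⟨rfl, rfl, rfl⟩))⟩,
            rfl, Or.inr (Or.inr (Or.inl ⟨hx, hy, hz, rfl⟩))⟩
          (ih (sx, sy + 1, sz) hmem (by dsimp only; omega))
      · -- x = dx, y = dy; since s ≠ d we must have sz > dz: go up
        have hzgt : dz < sz := by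
          rcases lt_or_eq_of_le hz with h | h
          · exact h
          · exact absurd ⟨hx, hy, h.symm⟩ hsd
        have hmem : memV L m n (sx, sy, sz - 1) := by
          have h1 : n dz ≤ n (sz - 1) := nmono _ _ hdz1 (by omega) (by omega)
          have h2 : m dz ≤ m (sz - 1) := mmono _ _ hdz1 (by omega) (by omega)
          refine ⟨?_, ?_, ?_, ?_, ?_, ?_⟩ <;> dsimp only <;> omega
        refine cons_path L m n (sx, sy, sz) (sx, sy, sz - 1) (dx, dy, dz)
          ⟨⟨⟨hsx1, hsxn, hsy1, hsym, hsz1, hszL⟩, hmem,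
            Or.inr (Or.inr (Or.inr (Or.inr (Or.inr ⟨rfl, rfl, by dsimp only; omega⟩))))⟩,
            rfl, Or.inr (Or.inr (Or.inr (Or.inr (Or.inl ⟨hx, hy, hzgt, rfl⟩))))⟩
          (ih (sx, sy, sz - 1) hmem (by dsimp only; omega))
      · -- north
        have hmem : memV L m n (sx, sy - 1, sz) := by
          refine ⟨?_, ?_, ?_, ?_, ?_, ?_⟩ <;> dsimp only <;> omega
        refine cons_path L m n (sx, sy, sz) (sx, sy - 1, sz) (dx, dy, dz)
          ⟨⟨⟨hsx1, hsxn, hsy1, hsym, hsz1, hszL⟩, hmem,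
            Or.inr (Or.inr (Or.inr (Or.inl ⟨rfl, by dsimp only; omega, rfl⟩)))⟩,
            rfl, Or.inl ⟨hx, hy, hz, rfl⟩⟩
          (ih (sx, sy - 1, sz) hmem (by dsimp only; omega))
    · -- west
      have hmem : memV L m n (sx - 1, sy, sz) := by
        refine ⟨?_, ?_, ?_, ?_, ?_, ?_⟩ <;> dsimp only <;> omega
      refine cons_path L m n (sx, sy, sz) (sx - 1, sy, sz) (dx, dy, dz)
        ⟨⟨⟨hsx1, hsxn, hsy1, hsym, hsz1, hszL⟩, hmem,
          Or.inr (Or.inl ⟨by dsimp only; omega, rfl, rfl⟩)⟩,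
          rfl, Or.inr (Or.inr (Or.inr (Or.inl ⟨hx, hz, rfl⟩)))⟩
        (ih (sx - 1, sy, sz) hmem (by dsimp only; omega))
end

section
/- (Theorem 4 for R1: livelock-freedom and hop-minimality) For all s, d ∈ V, the route generated by R1 from s toward d — the sequence v_0 = s and v_{i+1} = head of the unique arc in R1(v_i, d) — reaches d after exactly |s_x − d_x| + |s_y − d_y| + |s_z − d_z| steps; in particular every packet routed by R1 reaches its destination after finitely many hops. -/
/-- Potential: remaining hops to `d`. -/
def phi (d v : Vtx) : ℕ :=
  Nat.dist v.1 d.1 + Nat.dist v.2.1 d.2.1 + Nat.dist v.2.2 d.2.2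

lemma phi_eq_zero {d v : Vtx} (h : phi d v = 0) : v = d := by
  obtain ⟨x, y, z⟩ := v; obtain ⟨a, b, c⟩ := d
  simp only [phi, Nat.dist] at h
  simp only [Prod.mk.injEq]
  omega

lemma phi_step {d v w : Vtx} (h : (v, w) ∈ R1 v d) : phi d w + 1 = phi d v := by
  obtain ⟨-, hcase⟩ := h
  obtain ⟨x, y, z⟩ := v; obtain ⟨a, b, c⟩ := d
  rcases hcase with ⟨h1, h2, h3, rfl⟩ | ⟨h1, h2, rfl⟩ | ⟨h1, h2, h3, rfl⟩ |
    ⟨h1, h2, rfl⟩ | ⟨h1, h2, h3, rfl⟩ | ⟨h1, rfl⟩ <;>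
    simp_all only [phi, Nat.dist, northN, eastN, southN, westN, upN, downN] <;> omega

/-- Theorem 4 for `R1` (livelock freedom and hop minimality): the route generated
by `R1` from `s` toward `d` reaches `d` after exactly
`|s_x − d_x| + |s_y − d_y| + |s_z − d_z|` steps. -/
theorem R1_livelock_free (L : ℕ) (m n : ℕ → ℕ) (hL : 2 ≤ L)
    (hm2 : ∀ z, 1 ≤ z → z ≤ L → 2 ≤ m z)
    (hn2 : ∀ z, 1 ≤ z → z ≤ L → 2 ≤ n z)
    (hmMono : ∀ z, 1 ≤ z → z < L → m z ≤ m (z + 1))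
    (hnMono : ∀ z, 1 ≤ z → z < L → n z ≤ n (z + 1))
    (s d : Vtx) (hs : memV L m n s) (hd : memV L m n d)
    (p : ℕ → Vtx) (hp0 : p 0 = s)
    (hstep : ∀ i, p i ≠ d → (p i, p (i + 1)) ∈ R1 (p i) d) :
    p (Nat.dist s.1 d.1 + Nat.dist s.2.1 d.2.1 + Nat.dist s.2.2 d.2.2) = d ∧
      ∀ i < Nat.dist s.1 d.1 + Nat.dist s.2.1 d.2.1 + Nat.dist s.2.2 d.2.2,
        p i ≠ d := by
  set N := Nat.dist s.1 d.1 + Nat.dist s.2.1 d.2.1 + Nat.dist s.2.2 d.2.2 with hN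
  have key : ∀ i, i ≤ N → phi d (p i) = N - i := by
    intro i hi
    induction i with
    | zero => simp [hp0, phi, hN]
    | succ k ih =>
      have hk : k ≤ N := by omega
      have hphi := ih hk
      have hne : p k ≠ d := by
        intro h
        have : phi d (p k) = 0 := by simp [h, phi, Nat.dist]
        omega
      have := phi_step (hstep k hne)
      omega
  constructor
  · exact phi_eq_zero (by have := key N le_rfl; omega)
  · intro i hi h
    have := key i (le_of_lt hi)
    rw [h] at this
    simp [phi, Nat.dist] at this
    omega
end

section
/- (Impossible turns of R1, Table 1) None of the following ordered pairs of cardinal directions is a possible turn according to R1: (north, east), (north, south), (north, west), (north, down), (east, west), (east, down), (south, north), (south, east), (south, west), (south, down), (west, east), (west, down), (up, north), (up, east), (up, south), (up, west), (up, down), and (down, up). In particular, if an arc b is direct dependent on an up arc a according to R1, then b is an up arc. -/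
/-- Impossible turns of `R1` (Table 1): none of the listed 18 ordered pairs of
cardinal directions is a possible turn according to `R1`; in particular any arc
direct dependent on an up arc is itself an up arc. -/
theorem R1_impossible_turns (L : ℕ) (m n : ℕ → ℕ) (hL : 2 ≤ L)
    (hm2 : ∀ z, 1 ≤ z → z ≤ L → 2 ≤ m z)
    (hn2 : ∀ z, 1 ≤ z → z ≤ L → 2 ≤ n z)
    (hmMono : ∀ z, 1 ≤ z → z < L → m z ≤ m (z + 1))
    (hnMono : ∀ z, 1 ≤ z → z < L → n z ≤ n (z + 1)) :
    ¬ possibleTurn L m n R1 dirNorth dirEast ∧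
    ¬ possibleTurn L m n R1 dirNorth dirSouth ∧
    ¬ possibleTurn L m n R1 dirNorth dirWest ∧
    ¬ possibleTurn L m n R1 dirNorth dirDown ∧
    ¬ possibleTurn L m n R1 dirEast dirWest ∧
    ¬ possibleTurn L m n R1 dirEast dirDown ∧
    ¬ possibleTurn L m n R1 dirSouth dirNorth ∧
    ¬ possibleTurn L m n R1 dirSouth dirEast ∧
    ¬ possibleTurn L m n R1 dirSouth dirWest ∧
    ¬ possibleTurn L m n R1 dirSouth dirDown ∧
    ¬ possibleTurn L m n R1 dirWest dirEast ∧
    ¬ possibleTurn L m n R1 dirWest dirDown ∧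
    ¬ possibleTurn L m n R1 dirUp dirNorth ∧
    ¬ possibleTurn L m n R1 dirUp dirEast ∧
    ¬ possibleTurn L m n R1 dirUp dirSouth ∧
    ¬ possibleTurn L m n R1 dirUp dirWest ∧
    ¬ possibleTurn L m n R1 dirUp dirDown ∧
    ¬ possibleTurn L m n R1 dirDown dirUp ∧
    (∀ a b : Vtx × Vtx, dirUp a → directDep L m n R1 a b → dirUp b) := by
  refine ⟨?_, ?_, ?_, ?_, ?_, ?_, ?_, ?_, ?_, ?_, ?_, ?_, ?_, ?_, ?_, ?_, ?_, ?_, ?last⟩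
  case last =>
    rintro a b hup ⟨hA, hB, hab, d, hd, ha, hb⟩
    simp only [R1, Set.mem_setOf_eq, northN, eastN, southN, westN, upN, downN,
      Prod.ext_iff] at ha hb
    simp only [dirUp, Prod.ext_iff] at hup ⊢
    simp only [Prod.ext_iff] at hab
    rcases ha.2 with h|h|h|h|h|h <;> rcases hb.2 with h2|h2|h2|h2|h2|h2 <;> omega
  all_goals
    rintro ⟨a, b, hf, hg, hA, hB, hab, d, hd, ha, hb⟩
    simp only [R1, Set.mem_setOf_eq, northN, eastN, southN, westN, upN, downN,
      Prod.ext_iff] at ha hb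
    simp only [dirNorth, dirEast, dirSouth, dirWest, dirUp, dirDown] at hf hg
    simp only [Prod.ext_iff] at hab
    rcases ha.2 with h|h|h|h|h|h <;> rcases hb.2 with h2|h2|h2|h2|h2|h2 <;> omega
end

section
/- (Theorem 1) The channel dependency graph of the routing function R1 on the 3D mesh topology digraph is acyclic; together with the connectivity of R1, by Duato's theorem the routing R1 (Z⁺XY Z⁻ routing) is deadlock-free. -/
/-- A big constant dominating all coordinates of vertices in `V`. -/
def bigC (L : ℕ) (m n : ℕ → ℕ) : ℕ :=
  (Finset.Icc 1 L).sup n + (Finset.Icc 1 L).sup m + L + 1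

lemma memV_lt_bigC {L : ℕ} {m n : ℕ → ℕ} {v : Vtx} (hv : memV L m n v) :
    v.1 < bigC L m n ∧ v.2.1 < bigC L m n ∧ v.2.2 < bigC L m n := by
  obtain ⟨h1, h2, h3, h4, h5, h6⟩ := hv
  have hz : v.2.2 ∈ Finset.Icc 1 L := Finset.mem_Icc.mpr ⟨h5, h6⟩
  have hn : n v.2.2 ≤ (Finset.Icc 1 L).sup n := Finset.le_sup hz
  have hm : m v.2.2 ≤ (Finset.Icc 1 L).sup m := Finset.le_sup hz
  unfold bigC; omega

/-- Potential of an arc: lexicographic (phase, progress) encoded in ℕ. -/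
def psiC (C : ℕ) (a : Vtx × Vtx) : ℕ :=
  if a.1.2.2 < a.2.2.2 then a.2.2.2
  else if a.1.1 < a.2.1 then C + a.2.1
  else if a.2.1 < a.1.1 then 2*C + (C - 1 - a.2.1)
  else if a.2.2.1 < a.1.2.1 then 3*C + (C - 1 - a.2.2.1)
  else if a.1.2.1 < a.2.2.1 then 4*C + a.2.2.1
  else 5*C + (C - 1 - a.2.2.2)

lemma psiN {C : ℕ} {a : Vtx × Vtx} (h1 : a.2.1 = a.1.1) (h2 : a.2.2.1 + 1 = a.1.2.1)
    (h3 : a.2.2.2 = a.1.2.2) : psiC C a = 3*C + (C - 1 - a.2.2.1) := by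
  rw [psiC, if_neg (by omega), if_neg (by omega), if_neg (by omega), if_pos (by omega)]

lemma psiE {C : ℕ} {a : Vtx × Vtx} (h1 : a.2.1 = a.1.1 + 1) (h2 : a.2.2.1 = a.1.2.1)
    (h3 : a.2.2.2 = a.1.2.2) : psiC C a = C + a.2.1 := by
  rw [psiC, if_neg (by omega), if_pos (by omega)]

lemma psiS {C : ℕ} {a : Vtx × Vtx} (h1 : a.2.1 = a.1.1) (h2 : a.2.2.1 = a.1.2.1 + 1)
    (h3 : a.2.2.2 = a.1.2.2) : psiC C a = 4*C + a.2.2.1 := by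
  rw [psiC, if_neg (by omega), if_neg (by omega), if_neg (by omega), if_neg (by omega),
    if_pos (by omega)]

lemma psiW {C : ℕ} {a : Vtx × Vtx} (h1 : a.2.1 + 1 = a.1.1) (h2 : a.2.2.1 = a.1.2.1)
    (h3 : a.2.2.2 = a.1.2.2) : psiC C a = 2*C + (C - 1 - a.2.1) := by
  rw [psiC, if_neg (by omega), if_neg (by omega), if_pos (by omega)]

lemma psiU {C : ℕ} {a : Vtx × Vtx} (h1 : a.2.1 = a.1.1) (h2 : a.2.2.1 = a.1.2.1)
    (h3 : a.2.2.2 + 1 = a.1.2.2) : psiC C a = 5*C + (C - 1 - a.2.2.2) := by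
  rw [psiC, if_neg (by omega), if_neg (by omega), if_neg (by omega), if_neg (by omega),
    if_neg (by omega)]

lemma psiDn {C : ℕ} {a : Vtx × Vtx} (h3 : a.2.2.2 = a.1.2.2 + 1) : psiC C a = a.2.2.2 := by
  rw [psiC, if_pos (by omega)]

lemma psiC_lt_of_dep {L : ℕ} {m n : ℕ → ℕ} {a b : Vtx × Vtx}
    (h : directDep L m n R1 a b) : psiC (bigC L m n) a < psiC (bigC L m n) b := by
  obtain ⟨⟨ha1, ha2, -⟩, ⟨hb1, hb2, -⟩, hba, d, hd, hRa, hRb⟩ := h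
  obtain ⟨ca1, ca2, ca3⟩ := memV_lt_bigC ha2
  obtain ⟨cb1, cb2, cb3⟩ := memV_lt_bigC hb2
  obtain ⟨ea1, -, ea3, -, ea5, -⟩ := ha2
  obtain ⟨eb1, -, eb3, -, eb5, -⟩ := hb2
  simp only [R1, Set.mem_setOf_eq] at hRa hRb
  obtain ⟨-, hA⟩ := hRa
  obtain ⟨-, hB⟩ := hRb
  rw [Prod.ext_iff] at hba
  obtain ⟨hba1, hba2⟩ := hba
  rw [Prod.ext_iff] at hba2
  obtain ⟨hba2, hba3⟩ := hba2
  rcases hA with ⟨h1, h2, h3, h4⟩ | ⟨h1, h2, h4⟩ | ⟨h1, h2, h3, h4⟩ | ⟨h1, h2, h4⟩ | ⟨h1, h2, h3, h4⟩ | ⟨h1, h4⟩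
  · simp only [northN, Prod.ext_iff] at h4
    obtain ⟨h41, h42, h43⟩ := h4
    rcases hB with ⟨g1, g2, g3, g4⟩ | ⟨g1, g2, g4⟩ | ⟨g1, g2, g3, g4⟩ | ⟨g1, g2, g4⟩ | ⟨g1, g2, g3, g4⟩ | ⟨g1, g4⟩
    · simp only [northN, Prod.ext_iff] at g4
      obtain ⟨g41, g42, g43⟩ := g4
      rw [psiN (a := a) (by omega) (by omega) (by omega), psiN (a := b) (by omega) (by omega) (by omega)]
      omega
    · simp only [eastN, Prod.ext_iff] at g4
      obtain ⟨g41, g42, g43⟩ := g4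
      rw [psiN (a := a) (by omega) (by omega) (by omega), psiE (a := b) (by omega) (by omega) (by omega)]
      omega
    · simp only [southN, Prod.ext_iff] at g4
      obtain ⟨g41, g42, g43⟩ := g4
      rw [psiN (a := a) (by omega) (by omega) (by omega), psiS (a := b) (by omega) (by omega) (by omega)]
      omega
    · simp only [westN, Prod.ext_iff] at g4
      obtain ⟨g41, g42, g43⟩ := g4
      rw [psiN (a := a) (by omega) (by omega) (by omega), psiW (a := b) (by omega) (by omega) (by omega)]
      omega
    · simp only [upN, Prod.ext_iff] at g4
      obtain ⟨g41, g42, g43⟩ := g4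
      rw [psiN (a := a) (by omega) (by omega) (by omega), psiU (a := b) (by omega) (by omega) (by omega)]
      omega
    · simp only [downN, Prod.ext_iff] at g4
      obtain ⟨g41, g42, g43⟩ := g4
      rw [psiN (a := a) (by omega) (by omega) (by omega), psiDn (a := b) (by omega)]
      omega
  · simp only [eastN, Prod.ext_iff] at h4
    obtain ⟨h41, h42, h43⟩ := h4
    rcases hB with ⟨g1, g2, g3, g4⟩ | ⟨g1, g2, g4⟩ | ⟨g1, g2, g3, g4⟩ | ⟨g1, g2, g4⟩ | ⟨g1, g2, g3, g4⟩ | ⟨g1, g4⟩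
    · simp only [northN, Prod.ext_iff] at g4
      obtain ⟨g41, g42, g43⟩ := g4
      rw [psiE (a := a) (by omega) (by omega) (by omega), psiN (a := b) (by omega) (by omega) (by omega)]
      omega
    · simp only [eastN, Prod.ext_iff] at g4
      obtain ⟨g41, g42, g43⟩ := g4
      rw [psiE (a := a) (by omega) (by omega) (by omega), psiE (a := b) (by omega) (by omega) (by omega)]
      omega
    · simp only [southN, Prod.ext_iff] at g4
      obtain ⟨g41, g42, g43⟩ := g4
      rw [psiE (a := a) (by omega) (by omega) (by omega), psiS (a := b) (by omega) (by omega) (by omega)]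
      omega
    · simp only [westN, Prod.ext_iff] at g4
      obtain ⟨g41, g42, g43⟩ := g4
      rw [psiE (a := a) (by omega) (by omega) (by omega), psiW (a := b) (by omega) (by omega) (by omega)]
      omega
    · simp only [upN, Prod.ext_iff] at g4
      obtain ⟨g41, g42, g43⟩ := g4
      rw [psiE (a := a) (by omega) (by omega) (by omega), psiU (a := b) (by omega) (by omega) (by omega)]
      omega
    · simp only [downN, Prod.ext_iff] at g4
      obtain ⟨g41, g42, g43⟩ := g4
      rw [psiE (a := a) (by omega) (by omega) (by omega), psiDn (a := b) (by omega)]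
      omega
  · simp only [southN, Prod.ext_iff] at h4
    obtain ⟨h41, h42, h43⟩ := h4
    rcases hB with ⟨g1, g2, g3, g4⟩ | ⟨g1, g2, g4⟩ | ⟨g1, g2, g3, g4⟩ | ⟨g1, g2, g4⟩ | ⟨g1, g2, g3, g4⟩ | ⟨g1, g4⟩
    · simp only [northN, Prod.ext_iff] at g4
      obtain ⟨g41, g42, g43⟩ := g4
      rw [psiS (a := a) (by omega) (by omega) (by omega), psiN (a := b) (by omega) (by omega) (by omega)]
      omega
    · simp only [eastN, Prod.ext_iff] at g4
      obtain ⟨g41, g42, g43⟩ := g4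
      rw [psiS (a := a) (by omega) (by omega) (by omega), psiE (a := b) (by omega) (by omega) (by omega)]
      omega
    · simp only [southN, Prod.ext_iff] at g4
      obtain ⟨g41, g42, g43⟩ := g4
      rw [psiS (a := a) (by omega) (by omega) (by omega), psiS (a := b) (by omega) (by omega) (by omega)]
      omega
    · simp only [westN, Prod.ext_iff] at g4
      obtain ⟨g41, g42, g43⟩ := g4
      rw [psiS (a := a) (by omega) (by omega) (by omega), psiW (a := b) (by omega) (by omega) (by omega)]
      omega
    · simp only [upN, Prod.ext_iff] at g4
      obtain ⟨g41, g42, g43⟩ := g4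
      rw [psiS (a := a) (by omega) (by omega) (by omega), psiU (a := b) (by omega) (by omega) (by omega)]
      omega
    · simp only [downN, Prod.ext_iff] at g4
      obtain ⟨g41, g42, g43⟩ := g4
      rw [psiS (a := a) (by omega) (by omega) (by omega), psiDn (a := b) (by omega)]
      omega
  · simp only [westN, Prod.ext_iff] at h4
    obtain ⟨h41, h42, h43⟩ := h4
    rcases hB with ⟨g1, g2, g3, g4⟩ | ⟨g1, g2, g4⟩ | ⟨g1, g2, g3, g4⟩ | ⟨g1, g2, g4⟩ | ⟨g1, g2, g3, g4⟩ | ⟨g1, g4⟩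
    · simp only [northN, Prod.ext_iff] at g4
      obtain ⟨g41, g42, g43⟩ := g4
      rw [psiW (a := a) (by omega) (by omega) (by omega), psiN (a := b) (by omega) (by omega) (by omega)]
      omega
    · simp only [eastN, Prod.ext_iff] at g4
      obtain ⟨g41, g42, g43⟩ := g4
      rw [psiW (a := a) (by omega) (by omega) (by omega), psiE (a := b) (by omega) (by omega) (by omega)]
      omega
    · simp only [southN, Prod.ext_iff] at g4
      obtain ⟨g41, g42, g43⟩ := g4
      rw [psiW (a := a) (by omega) (by omega) (by omega), psiS (a := b) (by omega) (by omega) (by omega)]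
      omega
    · simp only [westN, Prod.ext_iff] at g4
      obtain ⟨g41, g42, g43⟩ := g4
      rw [psiW (a := a) (by omega) (by omega) (by omega), psiW (a := b) (by omega) (by omega) (by omega)]
      omega
    · simp only [upN, Prod.ext_iff] at g4
      obtain ⟨g41, g42, g43⟩ := g4
      rw [psiW (a := a) (by omega) (by omega) (by omega), psiU (a := b) (by omega) (by omega) (by omega)]
      omega
    · simp only [downN, Prod.ext_iff] at g4
      obtain ⟨g41, g42, g43⟩ := g4
      rw [psiW (a := a) (by omega) (by omega) (by omega), psiDn (a := b) (by omega)]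
      omega
  · simp only [upN, Prod.ext_iff] at h4
    obtain ⟨h41, h42, h43⟩ := h4
    rcases hB with ⟨g1, g2, g3, g4⟩ | ⟨g1, g2, g4⟩ | ⟨g1, g2, g3, g4⟩ | ⟨g1, g2, g4⟩ | ⟨g1, g2, g3, g4⟩ | ⟨g1, g4⟩
    · simp only [northN, Prod.ext_iff] at g4
      obtain ⟨g41, g42, g43⟩ := g4
      rw [psiU (a := a) (by omega) (by omega) (by omega), psiN (a := b) (by omega) (by omega) (by omega)]
      omega
    · simp only [eastN, Prod.ext_iff] at g4
      obtain ⟨g41, g42, g43⟩ := g4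
      rw [psiU (a := a) (by omega) (by omega) (by omega), psiE (a := b) (by omega) (by omega) (by omega)]
      omega
    · simp only [southN, Prod.ext_iff] at g4
      obtain ⟨g41, g42, g43⟩ := g4
      rw [psiU (a := a) (by omega) (by omega) (by omega), psiS (a := b) (by omega) (by omega) (by omega)]
      omega
    · simp only [westN, Prod.ext_iff] at g4
      obtain ⟨g41, g42, g43⟩ := g4
      rw [psiU (a := a) (by omega) (by omega) (by omega), psiW (a := b) (by omega) (by omega) (by omega)]
      omega
    · simp only [upN, Prod.ext_iff] at g4
      obtain ⟨g41, g42, g43⟩ := g4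
      rw [psiU (a := a) (by omega) (by omega) (by omega), psiU (a := b) (by omega) (by omega) (by omega)]
      omega
    · simp only [downN, Prod.ext_iff] at g4
      obtain ⟨g41, g42, g43⟩ := g4
      rw [psiU (a := a) (by omega) (by omega) (by omega), psiDn (a := b) (by omega)]
      omega
  · simp only [downN, Prod.ext_iff] at h4
    obtain ⟨h41, h42, h43⟩ := h4
    rcases hB with ⟨g1, g2, g3, g4⟩ | ⟨g1, g2, g4⟩ | ⟨g1, g2, g3, g4⟩ | ⟨g1, g2, g4⟩ | ⟨g1, g2, g3, g4⟩ | ⟨g1, g4⟩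
    · simp only [northN, Prod.ext_iff] at g4
      obtain ⟨g41, g42, g43⟩ := g4
      rw [psiDn (a := a) (by omega), psiN (a := b) (by omega) (by omega) (by omega)]
      omega
    · simp only [eastN, Prod.ext_iff] at g4
      obtain ⟨g41, g42, g43⟩ := g4
      rw [psiDn (a := a) (by omega), psiE (a := b) (by omega) (by omega) (by omega)]
      omega
    · simp only [southN, Prod.ext_iff] at g4
      obtain ⟨g41, g42, g43⟩ := g4
      rw [psiDn (a := a) (by omega), psiS (a := b) (by omega) (by omega) (by omega)]
      omega
    · simp only [westN, Prod.ext_iff] at g4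
      obtain ⟨g41, g42, g43⟩ := g4
      rw [psiDn (a := a) (by omega), psiW (a := b) (by omega) (by omega) (by omega)]
      omega
    · simp only [upN, Prod.ext_iff] at g4
      obtain ⟨g41, g42, g43⟩ := g4
      rw [psiDn (a := a) (by omega), psiU (a := b) (by omega) (by omega) (by omega)]
      omega
    · simp only [downN, Prod.ext_iff] at g4
      obtain ⟨g41, g42, g43⟩ := g4
      rw [psiDn (a := a) (by omega), psiDn (a := b) (by omega)]
      omega

/-- Theorem 1: the channel dependency graph of `R1` on the 3D mesh topology
digraph contains no directed cycle (hence, by Duato's theorem, `R1` is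
deadlock-free). -/
theorem R1_CDG_acyclic (L : ℕ) (m n : ℕ → ℕ) (hL : 2 ≤ L)
    (hm2 : ∀ z, 1 ≤ z → z ≤ L → 2 ≤ m z)
    (hn2 : ∀ z, 1 ≤ z → z ≤ L → 2 ≤ n z)
    (hmMono : ∀ z, 1 ≤ z → z < L → m z ≤ m (z + 1))
    (hnMono : ∀ z, 1 ≤ z → z < L → n z ≤ n (z + 1)) :
    ¬ ∃ (k : ℕ) (a : ℕ → Vtx × Vtx), 0 < k ∧
      (∀ i, i + 1 < k → directDep L m n R1 (a i) (a (i + 1))) ∧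
      directDep L m n R1 (a (k - 1)) (a 0) := by
  rintro ⟨k, a, hk, hchain, hlast⟩
  set C := bigC L m n with hC
  have mono : ∀ i, i < k → psiC C (a 0) ≤ psiC C (a i) := by
    intro i
    induction i with
    | zero => intro _; exact le_refl _
    | succ j ih =>
      intro h
      exact le_trans (ih (by omega)) (le_of_lt (psiC_lt_of_dep (hchain j h)))
  have h1 : psiC C (a 0) ≤ psiC C (a (k - 1)) := mono (k - 1) (by omega)
  have h2 : psiC C (a (k - 1)) < psiC C (a 0) := psiC_lt_of_dep hlast
  omega
end

section
/- For all v, d ∈ V with v ≠ d, the routing function R2(v, d) is a singleton and the arc it prescribes exists in A (in particular, whenever the threshold rule prescribes a down arc at v, one has v_z < Λ ≤ ℓ so the down arc exists); moreover R2(v, d) = ∅ if and only if v = d. -/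
/-- Horizontal (Manhattan) distance between the xy-coordinates of two routers. -/
def hDist (v d : Vtx) : ℕ := Nat.dist v.1 d.1 + Nat.dist v.2.1 d.2.1

/-- The routing function `R2` (ZXYZ routing) with rerouting layer `Lam` and
threshold function `Φ`. -/
def R2 (_Lam : ℕ) (Φ : ℕ → ℕ∞) (v d : Vtx) : Set (Vtx × Vtx) :=
  {a | a.1 = v ∧
    (((v.2.2 < d.2.2 ∨ (d.2.2 ≤ v.2.2 ∧ Φ v.2.2 < (hDist v d : ℕ∞))) ∧ a.2 = downN v) ∨
     (v ≠ d ∧ d.2.2 ≤ v.2.2 ∧ (hDist v d : ℕ∞) ≤ Φ v.2.2 ∧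
       ((v.1 < d.1 ∧ a.2 = eastN v) ∨
        (d.1 < v.1 ∧ a.2 = westN v) ∨
        (v.1 = d.1 ∧ d.2.1 < v.2.1 ∧ a.2 = northN v) ∨
        (v.1 = d.1 ∧ v.2.1 < d.2.1 ∧ a.2 = southN v) ∨
        (v.1 = d.1 ∧ v.2.1 = d.2.1 ∧ d.2.2 < v.2.2 ∧ a.2 = upN v))))}

/-- Helper: membership in `V` from explicit coordinates. -/
lemma memV_mk (L : ℕ) (m n : ℕ → ℕ) (x y z : ℕ) (h1 : 1 ≤ x) (h2 : x ≤ n z)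
    (h3 : 1 ≤ y) (h4 : y ≤ m z) (h5 : 1 ≤ z) (h6 : z ≤ L) :
    memV L m n (x, y, z) := ⟨h1, h2, h3, h4, h5, h6⟩

/-- For routers `v ≠ d`, `R2 v d` is a singleton whose arc exists in `A`;
moreover `R2 v d = ∅` iff `v = d`. -/
theorem R2_total_deterministic (L : ℕ) (m n : ℕ → ℕ) (hL : 2 ≤ L)
    (hm2 : ∀ z, 1 ≤ z → z ≤ L → 2 ≤ m z)
    (hn2 : ∀ z, 1 ≤ z → z ≤ L → 2 ≤ n z)
    (hmMono : ∀ z, 1 ≤ z → z < L → m z ≤ m (z + 1))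
    (hnMono : ∀ z, 1 ≤ z → z < L → n z ≤ n (z + 1))
    (Lam : ℕ) (hLam1 : 1 ≤ Lam) (hLam2 : Lam ≤ L)
    (Φ : ℕ → ℕ∞)
    (hΦ : ∃ c : ℕ, (∀ z, 1 ≤ z → z < Lam → Φ z = (c : ℕ∞)) ∧
      (∀ z, Lam ≤ z → z ≤ L → Φ z = ⊤))
    (v d : Vtx) (hv : memV L m n v) (hd : memV L m n d) :
    (v ≠ d → ∃ a : Vtx × Vtx, R2 Lam Φ v d = {a} ∧ inA L m n a) ∧
    (R2 Lam Φ v d = ∅ ↔ v = d) := by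
  obtain ⟨cΦ, hΦ1, hΦ2⟩ := hΦ
  have nmono : ∀ z1 z2 : ℕ, 1 ≤ z1 → z1 ≤ z2 → z2 ≤ L → n z1 ≤ n z2 := by
    intro z1 z2 h1 h12 h2L
    induction z2 with
    | zero => omega
    | succ k ih =>
      rcases Nat.lt_or_ge z1 (k + 1) with h | h
      · rcases Nat.eq_zero_or_pos k with hk | hk
        · omega
        · exact (ih (by omega) (by omega)).trans (hnMono k (by omega) (by omega))
      · have : z1 = k + 1 := by omega
        rw [this]
  have mmono : ∀ z1 z2 : ℕ, 1 ≤ z1 → z1 ≤ z2 → z2 ≤ L → m z1 ≤ m z2 := by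
    intro z1 z2 h1 h12 h2L
    induction z2 with
    | zero => omega
    | succ k ih =>
      rcases Nat.lt_or_ge z1 (k + 1) with h | h
      · rcases Nat.eq_zero_or_pos k with hk | hk
        · omega
        · exact (ih (by omega) (by omega)).trans (hmMono k (by omega) (by omega))
      · have : z1 = k + 1 := by omega
        rw [this]
  have key : v ≠ d → ∃ a : Vtx × Vtx, R2 Lam Φ v d = {a} ∧ inA L m n a := by
    intro hne
    obtain ⟨vx, vy, vz⟩ := v
    obtain ⟨dx, dy, dz⟩ := d
    simp only [memV] at hv hd
    obtain ⟨hv1, hv2, hv3, hv4, hv5, hv6⟩ := hv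
    obtain ⟨hd1, hd2, hd3, hd4, hd5, hd6⟩ := hd
    by_cases hz :
        vz < dz ∨ (dz ≤ vz ∧ Φ vz < (hDist (vx, vy, vz) (dx, dy, dz) : ℕ∞))
    · -- down
      have hvzL : vz < L := by
        rcases hz with h | ⟨_, h⟩
        · omega
        · by_contra hc
          rcases Nat.lt_or_ge vz Lam with h2 | h2
          · omega
          · rw [hΦ2 vz h2 hv6] at h
            exact not_top_lt h
      refine ⟨((vx, vy, vz), (vx, vy, vz + 1)), ?_, ?_⟩
      · ext a
        simp only [R2, Set.mem_setOf_eq, Set.mem_singleton_iff]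
        constructor
        · rintro ⟨ha1, hcase⟩
          rcases hcase with ⟨_, ha2⟩ | ⟨_, hle, hth, _⟩
          · exact Prod.ext ha1 ha2
          · rcases hz with h | ⟨_, h⟩
            · omega
            · exact absurd (lt_of_lt_of_le h hth) (lt_irrefl _)
        · rintro rfl
          exact ⟨rfl, Or.inl ⟨hz, rfl⟩⟩
      · exact ⟨memV_mk L m n vx vy vz hv1 hv2 hv3 hv4 hv5 hv6,
          memV_mk L m n vx vy (vz + 1) hv1
            (hv2.trans (nmono vz (vz + 1) hv5 (by omega) (by omega))) hv3
            (hv4.trans (mmono vz (vz + 1) hv5 (by omega) (by omega))) (by omega) (by omega),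
          Or.inr (Or.inr (Or.inr (Or.inr (Or.inl ⟨rfl, rfl, rfl⟩))))⟩
    · push_neg at hz
      obtain ⟨hz1, hz2⟩ := hz
      have hzle : dz ≤ vz := by omega
      have hth : (hDist (vx, vy, vz) (dx, dy, dz) : ℕ∞) ≤ Φ vz := hz2 hzle
      have excl :
          vz < dz ∨ (dz ≤ vz ∧ Φ vz < (hDist (vx, vy, vz) (dx, dy, dz) : ℕ∞)) → False := by
        intro h
        rcases h with h | ⟨_, h⟩
        · omega
        · exact absurd (lt_of_lt_of_le h hth) (lt_irrefl _)
      rcases Nat.lt_trichotomy vx dx with hx | hx | hx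
      · -- east
        have hnd : n dz ≤ n vz := nmono dz vz hd5 hzle hv6
        refine ⟨((vx, vy, vz), (vx + 1, vy, vz)), ?_, ?_⟩
        · ext a
          simp only [R2, Set.mem_setOf_eq, Set.mem_singleton_iff]
          constructor
          · rintro ⟨ha1, hcase⟩
            rcases hcase with ⟨h, _⟩ | ⟨_, _, _, hsub⟩
            · exact absurd h excl
            · rcases hsub with ⟨_, ha2⟩ | ⟨h, _⟩ | ⟨h, _, _⟩ | ⟨h, _, _⟩ | ⟨h, _, _, _⟩
              · exact Prod.ext ha1 ha2
              all_goals omega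
          · rintro rfl
            exact ⟨rfl, Or.inr ⟨hne, hzle, hth, Or.inl ⟨hx, rfl⟩⟩⟩
        · exact ⟨memV_mk L m n vx vy vz hv1 hv2 hv3 hv4 hv5 hv6,
            memV_mk L m n (vx + 1) vy vz (by omega) (by omega) hv3 hv4 hv5 hv6,
            Or.inl ⟨rfl, rfl, rfl⟩⟩
      · rcases Nat.lt_trichotomy vy dy with hy | hy | hy
        · -- south
          have hmd : m dz ≤ m vz := mmono dz vz hd5 hzle hv6
          refine ⟨((vx, vy, vz), (vx, vy + 1, vz)), ?_, ?_⟩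
          · ext a
            simp only [R2, Set.mem_setOf_eq, Set.mem_singleton_iff]
            constructor
            · rintro ⟨ha1, hcase⟩
              rcases hcase with ⟨h, _⟩ | ⟨_, _, _, hsub⟩
              · exact absurd h excl
              · rcases hsub with ⟨h, _⟩ | ⟨h, _⟩ | ⟨_, h, _⟩ | ⟨_, _, ha2⟩ | ⟨_, h, _, _⟩
                · omega
                · omega
                · omega
                · exact Prod.ext ha1 ha2
                · omega
            · rintro rfl
              exact ⟨rfl, Or.inr ⟨hne, hzle, hth,
                Or.inr (Or.inr (Or.inr (Or.inl ⟨hx, hy, rfl⟩)))⟩⟩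
          · exact ⟨memV_mk L m n vx vy vz hv1 hv2 hv3 hv4 hv5 hv6,
              memV_mk L m n vx (vy + 1) vz hv1 hv2 (by omega) (by omega) hv5 hv6,
              Or.inr (Or.inr (Or.inl ⟨rfl, rfl, rfl⟩))⟩
        · -- up (x and y equal, so dz < vz)
          have hzlt : dz < vz := by
            rcases Nat.lt_or_ge dz vz with h | h
            · exact h
            · have hvd : ((vx, vy, vz) : Vtx) = (dx, dy, dz) := by
                have hzz : vz = dz := by omega
                rw [hx, hy, hzz]
              exact absurd hvd hne
          refine ⟨((vx, vy, vz), (vx, vy, vz - 1)), ?_, ?_⟩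
          · ext a
            simp only [R2, Set.mem_setOf_eq, Set.mem_singleton_iff]
            constructor
            · rintro ⟨ha1, hcase⟩
              rcases hcase with ⟨h, _⟩ | ⟨_, _, _, hsub⟩
              · exact absurd h excl
              · rcases hsub with ⟨h, _⟩ | ⟨h, _⟩ | ⟨_, h, _⟩ | ⟨_, h, _⟩ | ⟨_, _, _, ha2⟩
                · omega
                · omega
                · omega
                · omega
                · exact Prod.ext ha1 ha2
            · rintro rfl
              exact ⟨rfl, Or.inr ⟨hne, hzle, hth,
                Or.inr (Or.inr (Or.inr (Or.inr ⟨hx, hy, hzlt, rfl⟩)))⟩⟩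
          · exact ⟨memV_mk L m n vx vy vz hv1 hv2 hv3 hv4 hv5 hv6,
              memV_mk L m n vx vy (vz - 1) hv1
                (le_trans (by omega) (nmono dz (vz - 1) hd5 (by omega) (by omega))) hv3
                (le_trans (by omega) (mmono dz (vz - 1) hd5 (by omega) (by omega)))
                (by omega) (by omega),
              Or.inr (Or.inr (Or.inr (Or.inr (Or.inr
                ⟨rfl, rfl, Nat.succ_pred_eq_of_pos (n := vz) (by omega)⟩))))⟩
        · -- north
          refine ⟨((vx, vy, vz), (vx, vy - 1, vz)), ?_, ?_⟩
          · ext a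
            simp only [R2, Set.mem_setOf_eq, Set.mem_singleton_iff]
            constructor
            · rintro ⟨ha1, hcase⟩
              rcases hcase with ⟨h, _⟩ | ⟨_, _, _, hsub⟩
              · exact absurd h excl
              · rcases hsub with ⟨h, _⟩ | ⟨h, _⟩ | ⟨_, _, ha2⟩ | ⟨_, h, _⟩ | ⟨_, h, _, _⟩
                · omega
                · omega
                · exact Prod.ext ha1 ha2
                · omega
                · omega
            · rintro rfl
              exact ⟨rfl, Or.inr ⟨hne, hzle, hth,
                Or.inr (Or.inr (Or.inl ⟨hx, hy, rfl⟩))⟩⟩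
          · exact ⟨memV_mk L m n vx vy vz hv1 hv2 hv3 hv4 hv5 hv6,
              memV_mk L m n vx (vy - 1) vz hv1 hv2 (by omega) (by omega) hv5 hv6,
              Or.inr (Or.inr (Or.inr (Or.inl
                ⟨rfl, Nat.succ_pred_eq_of_pos (n := vy) (by omega), rfl⟩)))⟩
      · -- west
        refine ⟨((vx, vy, vz), (vx - 1, vy, vz)), ?_, ?_⟩
        · ext a
          simp only [R2, Set.mem_setOf_eq, Set.mem_singleton_iff]
          constructor
          · rintro ⟨ha1, hcase⟩
            rcases hcase with ⟨h, _⟩ | ⟨_, _, _, hsub⟩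
            · exact absurd h excl
            · rcases hsub with ⟨h, _⟩ | ⟨_, ha2⟩ | ⟨h, _, _⟩ | ⟨h, _, _⟩ | ⟨h, _, _, _⟩
              · omega
              · exact Prod.ext ha1 ha2
              all_goals omega
          · rintro rfl
            exact ⟨rfl, Or.inr ⟨hne, hzle, hth, Or.inr (Or.inl ⟨hx, rfl⟩)⟩⟩
        · exact ⟨memV_mk L m n vx vy vz hv1 hv2 hv3 hv4 hv5 hv6,
            memV_mk L m n (vx - 1) vy vz (by omega) (by omega) hv3 hv4 hv5 hv6,
            Or.inr (Or.inl ⟨Nat.succ_pred_eq_of_pos (n := vx) (by omega), rfl, rfl⟩)⟩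
  refine ⟨key, ?_, ?_⟩
  · intro hemp
    by_contra hne
    obtain ⟨a, ha, _⟩ := key hne
    rw [hemp] at ha
    exact absurd ha.symm (Set.singleton_ne_empty a)
  · rintro rfl
    ext a
    simp only [R2, Set.mem_setOf_eq, Set.mem_empty_iff_false, iff_false, hDist,
      Nat.dist_self, Nat.add_zero, Nat.cast_zero]
    rintro ⟨_, ⟨h | ⟨_, h⟩, _⟩ | ⟨h, _⟩⟩
    · omega
    · exact absurd h (not_lt.mpr zero_le)
    · exact h rfl
end

section
/- (Impossible turns of R2, Table 1) None of the following ordered pairs of cardinal directions is a possible turn according to R2: (north, east), (north, south), (north, west), (north, down), (east, west), (east, down), (south, north), (south, east), (south, west), (south, down), (west, east), (west, down), (up, north), (up, east), (up, south), (up, west), (up, down), and (down, up). In particular, if an arc b is direct dependent on an up arc a according to R2, then b is an up arc. -/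
section Aux

variable {Lam : ℕ} {Φ : ℕ → ℕ∞} {d : Vtx} {a b : Vtx × Vtx}

private lemma stepNorth (ha : a ∈ R2 Lam Φ a.1 d) (hN : dirNorth a) :
    a.2.1 = d.1 ∧ d.2.1 ≤ a.2.2.1 ∧ d.2.2 ≤ a.2.2.2 ∧ (hDist a.2 d : ℕ∞) ≤ Φ a.2.2.2 := by
  obtain ⟨hx, hy, hz⟩ := hN
  rcases ha.2 with ⟨-, h⟩ | ⟨-, hzd, hc, ⟨-, h⟩|⟨-, h⟩|⟨hxd, hyd, h⟩|⟨-, -, h⟩|⟨-, -, -, h⟩⟩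
  · simp [h, downN] at hy
  · simp [h, eastN] at hy
  · simp [h, westN] at hy
  · have hle : hDist a.2 d ≤ hDist a.1 d := by
      simp [h, northN, hDist, Nat.dist]; omega
    have hzz : a.2.2.2 = a.1.2.2 := hz
    refine ⟨by simp [h, northN, southN]; omega, by simp [h, northN]; omega, by omega, ?_⟩
    rw [hzz]; exact le_trans (Nat.cast_le.mpr hle) hc
  · simp [h, southN] at hy
  · simp [h, upN] at hy

private lemma stepSouth (ha : a ∈ R2 Lam Φ a.1 d) (hS : dirSouth a) :
    a.2.1 = d.1 ∧ a.2.2.1 ≤ d.2.1 ∧ d.2.2 ≤ a.2.2.2 ∧ (hDist a.2 d : ℕ∞) ≤ Φ a.2.2.2 := by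
  obtain ⟨hx, hy, hz⟩ := hS
  rcases ha.2 with ⟨-, h⟩ | ⟨-, hzd, hc, ⟨-, h⟩|⟨-, h⟩|⟨-, -, h⟩|⟨hxd, hyd, h⟩|⟨-, -, -, h⟩⟩
  · simp [h, downN] at hy
  · simp [h, eastN] at hy
  · simp [h, westN] at hy
  · simp [h, northN] at hy; omega
  · have hle : hDist a.2 d ≤ hDist a.1 d := by
      simp [h, southN, hDist, Nat.dist]; omega
    have hzz : a.2.2.2 = a.1.2.2 := hz
    refine ⟨by simp [h, northN, southN]; omega, by simp [h, southN]; omega, by omega, ?_⟩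
    rw [hzz]; exact le_trans (Nat.cast_le.mpr hle) hc
  · simp [h, upN] at hy

private lemma stepEast (ha : a ∈ R2 Lam Φ a.1 d) (hE : dirEast a) :
    a.2.1 ≤ d.1 ∧ d.2.2 ≤ a.2.2.2 ∧ (hDist a.2 d : ℕ∞) ≤ Φ a.2.2.2 := by
  obtain ⟨hx, hy, hz⟩ := hE
  rcases ha.2 with ⟨-, h⟩ | ⟨-, hzd, hc, ⟨hxd, h⟩|⟨-, h⟩|⟨-, -, h⟩|⟨-, -, h⟩|⟨-, -, -, h⟩⟩
  · simp [h, downN] at hx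
  · have hle : hDist a.2 d ≤ hDist a.1 d := by
      simp [h, eastN, hDist, Nat.dist]; omega
    have hzz : a.2.2.2 = a.1.2.2 := hz
    refine ⟨by simp [h, eastN]; omega, by omega, ?_⟩
    rw [hzz]; exact le_trans (Nat.cast_le.mpr hle) hc
  · simp [h, westN] at hx; omega
  · simp [h, northN] at hx
  · simp [h, southN] at hx
  · simp [h, upN] at hx

private lemma stepWest (ha : a ∈ R2 Lam Φ a.1 d) (hW : dirWest a) :
    d.1 ≤ a.2.1 ∧ d.2.2 ≤ a.2.2.2 ∧ (hDist a.2 d : ℕ∞) ≤ Φ a.2.2.2 := by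
  obtain ⟨hx, hy, hz⟩ := hW
  rcases ha.2 with ⟨-, h⟩ | ⟨-, hzd, hc, ⟨-, h⟩|⟨hxd, h⟩|⟨-, -, h⟩|⟨-, -, h⟩|⟨-, -, -, h⟩⟩
  · simp [h, downN] at hx
  · simp [h, eastN] at hx
  · have hle : hDist a.2 d ≤ hDist a.1 d := by
      simp [h, westN, hDist, Nat.dist]; omega
    have hzz : a.2.2.2 = a.1.2.2 := hz
    refine ⟨by simp [h, westN]; omega, by omega, ?_⟩
    rw [hzz]; exact le_trans (Nat.cast_le.mpr hle) hc
  · simp [h, northN] at hx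
  · simp [h, southN] at hx
  · simp [h, upN] at hx

private lemma stepUp (ha : a ∈ R2 Lam Φ a.1 d) (hU : dirUp a) :
    a.2.1 = d.1 ∧ a.2.2.1 = d.2.1 ∧ d.2.2 ≤ a.2.2.2 := by
  have hz := hU
  unfold dirUp at hz
  rcases ha.2 with ⟨-, h⟩ | ⟨-, hzd, hc, ⟨-, h⟩|⟨-, h⟩|⟨-, -, h⟩|⟨-, -, h⟩|⟨hxd, hyd, hzu, h⟩⟩
  · simp [h, downN] at hz
  · simp [h, eastN] at hz
  · simp [h, westN] at hz
  · simp [h, northN] at hz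
  · simp [h, southN] at hz
  · exact ⟨by simp [h, upN]; omega, by simp [h, upN]; omega, by simp [h, upN]; omega⟩

private lemma stepDown (ha : a ∈ R2 Lam Φ a.1 d) (hD : dirDown a) :
    (a.1.2.2 < d.2.2 ∨ (d.2.2 ≤ a.1.2.2 ∧ Φ a.1.2.2 < (hDist a.1 d : ℕ∞))) ∧
      a.2 = downN a.1 := by
  have hz := hD
  unfold dirDown at hz
  rcases ha.2 with ⟨hc, h⟩ | ⟨-, hzd, hc, ⟨-, h⟩|⟨-, h⟩|⟨-, -, h⟩|⟨-, -, h⟩|⟨-, -, -, h⟩⟩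
  · exact ⟨hc, h⟩
  · simp [h, eastN] at hz
  · simp [h, westN] at hz
  · simp [h, northN] at hz
  · simp [h, southN] at hz
  · simp [h, upN] at hz; omega

private lemma stepUpRev (hb : b ∈ R2 Lam Φ b.1 d) (hU : dirUp b) :
    b.1.1 = d.1 ∧ b.1.2.1 = d.2.1 ∧ d.2.2 < b.1.2.2 := by
  have hz := hU
  unfold dirUp at hz
  rcases hb.2 with ⟨-, h⟩ | ⟨-, hzd, hc, ⟨-, h⟩|⟨-, h⟩|⟨-, -, h⟩|⟨-, -, h⟩|⟨hxd, hyd, hzu, h⟩⟩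
  · simp [h, downN] at hz
  · simp [h, eastN] at hz
  · simp [h, westN] at hz
  · simp [h, northN] at hz
  · simp [h, southN] at hz
  · exact ⟨hxd, hyd, hzu⟩

private lemma upOnly (hx : b.1.1 = d.1) (hy : b.1.2.1 = d.2.1) (hz : d.2.2 ≤ b.1.2.2)
    (hb : b ∈ R2 Lam Φ b.1 d) : dirUp b := by
  have hd0 : hDist b.1 d = 0 := by simp [hDist, Nat.dist]; omega
  rcases hb.2 with ⟨hc | ⟨-, hc⟩, h⟩ | ⟨-, hzd, hc, ⟨hc', h⟩|⟨hc', h⟩|⟨-, hc', h⟩|⟨-, hc', h⟩|⟨-, -, hzu, h⟩⟩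
  · omega
  · rw [hd0] at hc; exact absurd hc (by simp)
  · omega
  · omega
  · omega
  · omega
  · unfold dirUp; simp [h, upN]; omega

private lemma notEast (hx : d.1 ≤ b.1.1) (hb : b ∈ R2 Lam Φ b.1 d) : ¬ dirEast b := by
  intro hE
  obtain ⟨h1, -, -⟩ := hE
  rcases hb.2 with ⟨-, h⟩ | ⟨-, -, -, ⟨hc, h⟩|⟨hc, h⟩|⟨-, -, h⟩|⟨-, -, h⟩|⟨-, -, -, h⟩⟩ <;>
    simp [h, downN, eastN, westN, northN, southN, upN] at h1 <;> omega

private lemma notWest (hx : b.1.1 ≤ d.1) (hb : b ∈ R2 Lam Φ b.1 d) : ¬ dirWest b := by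
  intro hW
  obtain ⟨h1, -, -⟩ := hW
  rcases hb.2 with ⟨-, h⟩ | ⟨-, -, -, ⟨hc, h⟩|⟨hc, h⟩|⟨-, -, h⟩|⟨-, -, h⟩|⟨-, -, -, h⟩⟩ <;>
    simp [h, downN, eastN, westN, northN, southN, upN] at h1 <;> omega

private lemma notNorth (hy : b.1.2.1 ≤ d.2.1) (hb : b ∈ R2 Lam Φ b.1 d) : ¬ dirNorth b := by
  intro hN
  obtain ⟨-, h1, -⟩ := hN
  rcases hb.2 with ⟨-, h⟩ | ⟨-, -, -, ⟨-, h⟩|⟨-, h⟩|⟨-, hc, h⟩|⟨-, hc, h⟩|⟨-, -, -, h⟩⟩ <;>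
    simp [h, downN, eastN, westN, northN, southN, upN] at h1 <;> omega

private lemma notSouth (hy : d.2.1 ≤ b.1.2.1) (hb : b ∈ R2 Lam Φ b.1 d) : ¬ dirSouth b := by
  intro hS
  obtain ⟨-, h1, -⟩ := hS
  rcases hb.2 with ⟨-, h⟩ | ⟨-, -, -, ⟨-, h⟩|⟨-, h⟩|⟨-, hc, h⟩|⟨-, hc, h⟩|⟨-, -, -, h⟩⟩ <;>
    simp [h, downN, eastN, westN, northN, southN, upN] at h1 <;> omega

private lemma notDown (hz : d.2.2 ≤ b.1.2.2) (hΦle : (hDist b.1 d : ℕ∞) ≤ Φ b.1.2.2)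
    (hb : b ∈ R2 Lam Φ b.1 d) : ¬ dirDown b := by
  intro hD
  have h1 := hD
  unfold dirDown at h1
  rcases hb.2 with ⟨hc | ⟨-, hc⟩, h⟩ | ⟨-, -, -, ⟨-, h⟩|⟨-, h⟩|⟨-, -, h⟩|⟨-, -, h⟩|⟨-, -, -, h⟩⟩
  · omega
  · exact absurd hΦle (not_le.mpr hc)
  all_goals simp [h, eastN, westN, northN, southN, upN] at h1 <;> omega

end Aux

/-- Impossible turns of `R2` (Table 1): none of the listed 18 ordered pairs of
cardinal directions is a possible turn according to `R2`; in particular any arc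
direct dependent on an up arc is itself an up arc. -/
theorem R2_impossible_turns (L : ℕ) (m n : ℕ → ℕ) (hL : 2 ≤ L)
    (hm2 : ∀ z, 1 ≤ z → z ≤ L → 2 ≤ m z)
    (hn2 : ∀ z, 1 ≤ z → z ≤ L → 2 ≤ n z)
    (hmMono : ∀ z, 1 ≤ z → z < L → m z ≤ m (z + 1))
    (hnMono : ∀ z, 1 ≤ z → z < L → n z ≤ n (z + 1))
    (Lam : ℕ) (hLam1 : 1 ≤ Lam) (hLam2 : Lam ≤ L)
    (Φ : ℕ → ℕ∞)
    (hΦ : ∃ c : ℕ, (∀ z, 1 ≤ z → z < Lam → Φ z = (c : ℕ∞)) ∧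
      (∀ z, Lam ≤ z → z ≤ L → Φ z = ⊤)) :
    ¬ possibleTurn L m n (R2 Lam Φ) dirNorth dirEast ∧
    ¬ possibleTurn L m n (R2 Lam Φ) dirNorth dirSouth ∧
    ¬ possibleTurn L m n (R2 Lam Φ) dirNorth dirWest ∧
    ¬ possibleTurn L m n (R2 Lam Φ) dirNorth dirDown ∧
    ¬ possibleTurn L m n (R2 Lam Φ) dirEast dirWest ∧
    ¬ possibleTurn L m n (R2 Lam Φ) dirEast dirDown ∧
    ¬ possibleTurn L m n (R2 Lam Φ) dirSouth dirNorth ∧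
    ¬ possibleTurn L m n (R2 Lam Φ) dirSouth dirEast ∧
    ¬ possibleTurn L m n (R2 Lam Φ) dirSouth dirWest ∧
    ¬ possibleTurn L m n (R2 Lam Φ) dirSouth dirDown ∧
    ¬ possibleTurn L m n (R2 Lam Φ) dirWest dirEast ∧
    ¬ possibleTurn L m n (R2 Lam Φ) dirWest dirDown ∧
    ¬ possibleTurn L m n (R2 Lam Φ) dirUp dirNorth ∧
    ¬ possibleTurn L m n (R2 Lam Φ) dirUp dirEast ∧
    ¬ possibleTurn L m n (R2 Lam Φ) dirUp dirSouth ∧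
    ¬ possibleTurn L m n (R2 Lam Φ) dirUp dirWest ∧
    ¬ possibleTurn L m n (R2 Lam Φ) dirUp dirDown ∧
    ¬ possibleTurn L m n (R2 Lam Φ) dirDown dirUp ∧
    (∀ a b : Vtx × Vtx, dirUp a → directDep L m n (R2 Lam Φ) a b → dirUp b) := by
  constructor
  · rintro ⟨a, b, hfa, hgb, -, -, hvb, d, -, haR, hbR⟩
    obtain ⟨h1, h2, h3, h4⟩ := stepNorth haR hfa
    rw [← hvb] at h1 h2 h3 h4
    exact notEast h1.ge hbR hgb
  constructor
  · rintro ⟨a, b, hfa, hgb, -, -, hvb, d, -, haR, hbR⟩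
    obtain ⟨h1, h2, h3, h4⟩ := stepNorth haR hfa
    rw [← hvb] at h1 h2 h3 h4
    exact notSouth h2 hbR hgb
  constructor
  · rintro ⟨a, b, hfa, hgb, -, -, hvb, d, -, haR, hbR⟩
    obtain ⟨h1, h2, h3, h4⟩ := stepNorth haR hfa
    rw [← hvb] at h1 h2 h3 h4
    exact notWest h1.le hbR hgb
  constructor
  · rintro ⟨a, b, hfa, hgb, -, -, hvb, d, -, haR, hbR⟩
    obtain ⟨h1, h2, h3, h4⟩ := stepNorth haR hfa
    rw [← hvb] at h1 h2 h3 h4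
    exact notDown h3 h4 hbR hgb
  constructor
  · rintro ⟨a, b, hfa, hgb, -, -, hvb, d, -, haR, hbR⟩
    obtain ⟨h1, h2, h3⟩ := stepEast haR hfa
    rw [← hvb] at h1 h2 h3
    exact notWest h1 hbR hgb
  constructor
  · rintro ⟨a, b, hfa, hgb, -, -, hvb, d, -, haR, hbR⟩
    obtain ⟨h1, h2, h3⟩ := stepEast haR hfa
    rw [← hvb] at h1 h2 h3
    exact notDown h2 h3 hbR hgb
  constructor
  · rintro ⟨a, b, hfa, hgb, -, -, hvb, d, -, haR, hbR⟩
    obtain ⟨h1, h2, h3, h4⟩ := stepSouth haR hfa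
    rw [← hvb] at h1 h2 h3 h4
    exact notNorth h2 hbR hgb
  constructor
  · rintro ⟨a, b, hfa, hgb, -, -, hvb, d, -, haR, hbR⟩
    obtain ⟨h1, h2, h3, h4⟩ := stepSouth haR hfa
    rw [← hvb] at h1 h2 h3 h4
    exact notEast h1.ge hbR hgb
  constructor
  · rintro ⟨a, b, hfa, hgb, -, -, hvb, d, -, haR, hbR⟩
    obtain ⟨h1, h2, h3, h4⟩ := stepSouth haR hfa
    rw [← hvb] at h1 h2 h3 h4
    exact notWest h1.le hbR hgb
  constructor
  · rintro ⟨a, b, hfa, hgb, -, -, hvb, d, -, haR, hbR⟩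
    obtain ⟨h1, h2, h3, h4⟩ := stepSouth haR hfa
    rw [← hvb] at h1 h2 h3 h4
    exact notDown h3 h4 hbR hgb
  constructor
  · rintro ⟨a, b, hfa, hgb, -, -, hvb, d, -, haR, hbR⟩
    obtain ⟨h1, h2, h3⟩ := stepWest haR hfa
    rw [← hvb] at h1 h2 h3
    exact notEast h1 hbR hgb
  constructor
  · rintro ⟨a, b, hfa, hgb, -, -, hvb, d, -, haR, hbR⟩
    obtain ⟨h1, h2, h3⟩ := stepWest haR hfa
    rw [← hvb] at h1 h2 h3
    exact notDown h2 h3 hbR hgb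
  constructor
  · rintro ⟨a, b, hfa, hgb, -, -, hvb, d, -, haR, hbR⟩
    obtain ⟨h1, h2, h3⟩ := stepUp haR hfa
    rw [← hvb] at h1 h2 h3
    have hub := upOnly h1 h2 h3 hbR
    obtain ⟨-, -, hz⟩ := hgb
    unfold dirUp at hub; omega
  constructor
  · rintro ⟨a, b, hfa, hgb, -, -, hvb, d, -, haR, hbR⟩
    obtain ⟨h1, h2, h3⟩ := stepUp haR hfa
    rw [← hvb] at h1 h2 h3
    have hub := upOnly h1 h2 h3 hbR
    obtain ⟨-, -, hz⟩ := hgb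
    unfold dirUp at hub; omega
  constructor
  · rintro ⟨a, b, hfa, hgb, -, -, hvb, d, -, haR, hbR⟩
    obtain ⟨h1, h2, h3⟩ := stepUp haR hfa
    rw [← hvb] at h1 h2 h3
    have hub := upOnly h1 h2 h3 hbR
    obtain ⟨-, -, hz⟩ := hgb
    unfold dirUp at hub; omega
  constructor
  · rintro ⟨a, b, hfa, hgb, -, -, hvb, d, -, haR, hbR⟩
    obtain ⟨h1, h2, h3⟩ := stepUp haR hfa
    rw [← hvb] at h1 h2 h3
    have hub := upOnly h1 h2 h3 hbR
    obtain ⟨-, -, hz⟩ := hgb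
    unfold dirUp at hub; omega
  constructor
  · rintro ⟨a, b, hfa, hgb, -, -, hvb, d, -, haR, hbR⟩
    obtain ⟨h1, h2, h3⟩ := stepUp haR hfa
    rw [← hvb] at h1 h2 h3
    have hub := upOnly h1 h2 h3 hbR
    unfold dirUp at hub; unfold dirDown at hgb; omega
  constructor
  · rintro ⟨a, b, hfa, hgb, -, -, hvb, d, -, haR, hbR⟩
    obtain ⟨hcond, hdn⟩ := stepDown haR hfa
    obtain ⟨h1, h2, h3⟩ := stepUpRev hbR hgb
    have hb1 : b.1 = downN a.1 := hvb.trans hdn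
    simp only [hb1, downN] at h1 h2 h3
    have hd0 : hDist a.1 d = 0 := by simp [hDist, Nat.dist]; omega
    rcases hcond with hc | ⟨-, hc⟩
    · omega
    · rw [hd0] at hc; exact absurd hc (by simp)
  · rintro a b hfa ⟨-, -, hvb, d, -, haR, hbR⟩
    obtain ⟨h1, h2, h3⟩ := stepUp haR hfa
    rw [← hvb] at h1 h2 h3
    exact upOnly h1 h2 h3 hbR
end

section
/- (Descent lemma for R2, Case 2.1) Suppose R2 prescribes a down arc at v toward destination d because v_z ≥ d_z and |v_x − d_x| + |v_y − d_y| > Φ(v_z). Then along the route generated by R2 from v toward d, every subsequent router w with w_z < Λ again satisfies the threshold condition and R2(w, d) prescribes the down arc; consequently the route descends vertically (keeping the same x- and y-coordinates) until it reaches layer Λ. -/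
/-- Descent lemma for `R2` (Case 2.1): if `R2` prescribes a down arc at `v`
toward `d` because `v_z ≥ d_z` and the horizontal distance exceeds the threshold,
then along the route generated by `R2` every subsequent router strictly above layer
`Lam` again satisfies the threshold condition and is prescribed the down arc;
consequently the route descends vertically (same x- and y-coordinates) until it
reaches layer `Lam`. -/
theorem R2_descends_to_Lam (L : ℕ) (m n : ℕ → ℕ) (hL : 2 ≤ L)
    (hm2 : ∀ z, 1 ≤ z → z ≤ L → 2 ≤ m z)
    (hn2 : ∀ z, 1 ≤ z → z ≤ L → 2 ≤ n z)
    (hmMono : ∀ z, 1 ≤ z → z < L → m z ≤ m (z + 1))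
    (hnMono : ∀ z, 1 ≤ z → z < L → n z ≤ n (z + 1))
    (Lam : ℕ) (hLam1 : 1 ≤ Lam) (hLam2 : Lam ≤ L)
    (Φ : ℕ → ℕ∞)
    (hΦ : ∃ c : ℕ, (∀ z, 1 ≤ z → z < Lam → Φ z = (c : ℕ∞)) ∧
      (∀ z, Lam ≤ z → z ≤ L → Φ z = ⊤))
    (v d : Vtx) (hv : memV L m n v) (hd : memV L m n d)
    (hzd : d.2.2 ≤ v.2.2) (hthr : Φ v.2.2 < (hDist v d : ℕ∞))
    (p : ℕ → Vtx) (hp0 : p 0 = v)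
    (hstep : ∀ i, p i ≠ d → (p i, p (i + 1)) ∈ R2 Lam Φ (p i) d) :
    (∀ i, v.2.2 + i ≤ Lam → p i = (v.1, v.2.1, v.2.2 + i)) ∧
    (∀ i, v.2.2 + i < Lam →
      Φ ((p i).2.2) < (hDist (p i) d : ℕ∞) ∧
      R2 Lam Φ (p i) d = {(p i, downN (p i))}) := by

  obtain ⟨c, hcfin, hctop⟩ := hΦ
  have hvz1 : 1 ≤ v.2.2 := hv.2.2.2.2.1
  have hvzL : v.2.2 ≤ L := hv.2.2.2.2.2
  have hvzLam : v.2.2 < Lam := by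
    by_contra h
    push_neg at h
    rw [hctop v.2.2 h hvzL] at hthr
    exact (not_top_lt hthr).elim
  have hΦv : Φ v.2.2 = (c : ℕ∞) := hcfin v.2.2 hvz1 hvzLam
  have hdistpos : 0 < hDist v d := by
    rw [hΦv] at hthr
    by_contra h
    push_neg at h
    interval_cases hh : hDist v d
    simp at hthr
  -- key facts at step i, assuming p i = (v.1, v.2.1, v.2.2 + i) and v.2.2 + i < Lam
  have hfacts : ∀ i, v.2.2 + i < Lam → p i = (v.1, v.2.1, v.2.2 + i) →
      Φ ((p i).2.2) < (hDist (p i) d : ℕ∞) ∧ d.2.2 ≤ (p i).2.2 ∧ p i ≠ d := by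
    intro i hlt hpi
    have hdeq : hDist (p i) d = hDist v d := by rw [hpi]; rfl
    have hΦi : Φ ((p i).2.2) = (c : ℕ∞) := by
      rw [hpi]; exact hcfin (v.2.2 + i) (by omega) hlt
    have hthri : Φ ((p i).2.2) < (hDist (p i) d : ℕ∞) := by
      rw [hΦi, hdeq, ← hΦv]; exact hthr
    refine ⟨hthri, ?_, ?_⟩
    · rw [hpi]; exact le_trans hzd (Nat.le_add_right _ _)
    · intro h
      rw [h] at hpi
      have h1 : d.1 = v.1 := by rw [hpi]
      have h2 : d.2.1 = v.2.1 := by rw [hpi]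
      have h0 : hDist v d = 0 := by simp [hDist, h1, h2, Nat.dist_self]
      exact hdistpos.ne' h0
  have key : ∀ i, v.2.2 + i ≤ Lam → p i = (v.1, v.2.1, v.2.2 + i) := by
    intro i
    induction i with
    | zero => intro _; simpa using hp0
    | succ i ih =>
      intro hle
      have hlt : v.2.2 + i < Lam := by omega
      have hpi := ih (by omega)
      obtain ⟨hthri, hzdi, hne⟩ := hfacts i hlt hpi
      have hmem := hstep i hne
      simp only [R2, Set.mem_setOf_eq] at hmem
      obtain ⟨-, hcase⟩ := hmem
      rcases hcase with ⟨-, hdown⟩ | ⟨-, -, hle2, -⟩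
      · rw [hdown, hpi]; rfl
      · exact absurd hle2 (not_le.mpr hthri)
  refine ⟨key, fun i hi => ?_⟩
  have hpi := key i (le_of_lt hi)
  obtain ⟨hthri, hzdi, hne⟩ := hfacts i hi hpi
  refine ⟨hthri, ?_⟩
  ext a
  simp only [R2, Set.mem_setOf_eq, Set.mem_singleton_iff]
  constructor
  · rintro ⟨ha1, hcase⟩
    rcases hcase with ⟨-, hdown⟩ | ⟨-, -, hle2, -⟩
    · exact Prod.ext ha1 hdown
    · exact absurd hle2 (not_le.mpr hthri)
  · rintro rfl
    exact ⟨rfl, Or.inl ⟨Or.inr ⟨hzdi, hthri⟩, rfl⟩⟩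
end

section
/- (Lemma 4) The routing function R2 is connected: for every pair of routers s, d ∈ V there exists a directed path v_1 = s, v_2, …, v_k = d in the 3D mesh topology digraph T such that each arc (v_i, v_{i+1}) belongs to R2(v_i, d). -/
open scoped Classical in
/-- Termination measure for the routing `R2` toward destination `d`. -/
noncomputable def mu (L : ℕ) (m n : ℕ → ℕ) (Φ : ℕ → ℕ∞) (d v : Vtx) : ℕ :=
  if v.2.2 < d.2.2 ∨ (d.2.2 ≤ v.2.2 ∧ Φ v.2.2 < (hDist v d : ℕ∞)) then
    (m L + n L + L + 1) + (L - v.2.2)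
  else hDist v d + (v.2.2 - d.2.2)

lemma R2_step (L : ℕ) (m n : ℕ → ℕ)
    (hmMono : ∀ z1 z2, 1 ≤ z1 → z1 ≤ z2 → z2 ≤ L → m z1 ≤ m z2)
    (hnMono : ∀ z1 z2, 1 ≤ z1 → z1 ≤ z2 → z2 ≤ L → n z1 ≤ n z2)
    (Lam : ℕ) (hLam2 : Lam ≤ L)
    (Φ : ℕ → ℕ∞) (hc2 : ∀ z, Lam ≤ z → z ≤ L → Φ z = ⊤)
    (d : Vtx) (hd : memV L m n d)
    (v : Vtx) (hv : memV L m n v) (hne : v ≠ d) :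
    ∃ v', memV L m n v' ∧ inA L m n (v, v') ∧ (v, v') ∈ R2 Lam Φ v d ∧
      mu L m n Φ d v' < mu L m n Φ d v := by
  obtain ⟨hvx1, hvxn, hvy1, hvym, hvz1, hvzL⟩ := hv
  obtain ⟨hdx1, hdxn, hdy1, hdym, hdz1, hdzL⟩ := hd
  have hvmem : memV L m n v := ⟨hvx1, hvxn, hvy1, hvym, hvz1, hvzL⟩
  by_cases hP : v.2.2 < d.2.2 ∨ (d.2.2 ≤ v.2.2 ∧ Φ v.2.2 < (hDist v d : ℕ∞))
  · -- down step
    have hzL : v.2.2 + 1 ≤ L := by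
      rcases hP with h | ⟨_, h⟩
      · omega
      · by_contra hcon
        have hΛ : Lam ≤ v.2.2 := by omega
        rw [hc2 v.2.2 hΛ hvzL] at h
        exact not_top_lt h
    have hmem' : memV L m n (downN v) :=
      ⟨hvx1, le_trans hvxn (hnMono v.2.2 (v.2.2+1) hvz1 (by omega) hzL),
        hvy1, le_trans hvym (hmMono v.2.2 (v.2.2+1) hvz1 (by omega) hzL),
        by simp only [downN]; omega, hzL⟩
    refine ⟨downN v, hmem', ⟨hvmem, hmem', ?_⟩, ⟨rfl, Or.inl ⟨hP, rfl⟩⟩, ?_⟩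
    · right; right; right; right; left
      simp [downN]
    · have hdd : hDist (downN v) d = hDist v d := by simp [hDist, downN]
      have hdb : hDist v d ≤ n L + m L := by
        have h1 : v.1 ≤ n L := le_trans hvxn (hnMono v.2.2 L hvz1 hvzL le_rfl)
        have h2 : d.1 ≤ n L := le_trans hdxn (hnMono d.2.2 L hdz1 hdzL le_rfl)
        have h3 : v.2.1 ≤ m L := le_trans hvym (hmMono v.2.2 L hvz1 hvzL le_rfl)
        have h4 : d.2.1 ≤ m L := le_trans hdym (hmMono d.2.2 L hdz1 hdzL le_rfl)
        simp only [hDist, Nat.dist]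
        omega
      rw [mu, mu, if_pos hP]
      split
      · simp only [downN]; omega
      · rw [hdd]; simp only [downN]; omega
  · -- horizontal or upward step
    have hP0 := hP
    push_neg at hP
    have hdz : d.2.2 ≤ v.2.2 := hP.1
    have hΦle : (hDist v d : ℕ∞) ≤ Φ v.2.2 := hP.2 hP.1
    have hndz : d.1 ≤ n v.2.2 :=
      le_trans hdxn (hnMono d.2.2 v.2.2 hdz1 hdz hvzL)
    have hmdz : d.2.1 ≤ m v.2.2 :=
      le_trans hdym (hmMono d.2.2 v.2.2 hdz1 hdz hvzL)
    rcases Nat.lt_trichotomy v.1 d.1 with hx | hx | hx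
    · -- east
      have hmem' : memV L m n (eastN v) :=
        ⟨by simp only [eastN]; omega, by simp only [eastN]; omega, hvy1, hvym, hvz1, hvzL⟩
      have hdlt : hDist (eastN v) d < hDist v d := by
        simp only [hDist, eastN, Nat.dist]; omega
      refine ⟨eastN v, hmem', ⟨hvmem, hmem', Or.inl (by simp [eastN])⟩,
        ⟨rfl, Or.inr ⟨hne, hdz, hΦle, Or.inl ⟨hx, rfl⟩⟩⟩, ?_⟩
      have hP' : ¬((eastN v).2.2 < d.2.2 ∨
          (d.2.2 ≤ (eastN v).2.2 ∧ Φ (eastN v).2.2 < (hDist (eastN v) d : ℕ∞))) := by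
        simp only [eastN]
        push_neg
        refine ⟨hdz, fun _ => ?_⟩
        exact le_trans (Nat.cast_le.mpr hdlt.le) hΦle
      rw [mu, mu, if_neg hP', if_neg hP0]
      simp only [eastN] at hdlt ⊢
      omega
    · rcases Nat.lt_trichotomy v.2.1 d.2.1 with hy | hy | hy
      · -- south
        have hmem' : memV L m n (southN v) :=
          ⟨hvx1, hvxn, by simp only [southN]; omega, by simp only [southN]; omega, hvz1, hvzL⟩
        have hdlt : hDist (southN v) d < hDist v d := by
          simp only [hDist, southN, Nat.dist]; omega
        refine ⟨southN v, hmem', ⟨hvmem, hmem', Or.inr (Or.inr (Or.inl (by simp [southN])))⟩,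
          ⟨rfl, Or.inr ⟨hne, hdz, hΦle, Or.inr (Or.inr (Or.inr (Or.inl ⟨hx, hy, rfl⟩)))⟩⟩, ?_⟩
        have hP' : ¬((southN v).2.2 < d.2.2 ∨
            (d.2.2 ≤ (southN v).2.2 ∧ Φ (southN v).2.2 < (hDist (southN v) d : ℕ∞))) := by
          simp only [southN]
          push_neg
          exact ⟨hdz, fun _ => le_trans (Nat.cast_le.mpr hdlt.le) hΦle⟩
        rw [mu, mu, if_neg hP', if_neg hP0]
        simp only [southN] at hdlt ⊢
        omega
      · -- up
        have hzgt : d.2.2 < v.2.2 := by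
          rcases Nat.lt_or_ge d.2.2 v.2.2 with h | h
          · exact h
          · exfalso
            apply hne
            have : v.2.2 = d.2.2 := by omega
            exact Prod.ext hx (Prod.ext hy this)
        have hmem' : memV L m n (upN v) :=
          ⟨show 1 ≤ v.1 from hvx1,
           by simp only [upN]
              calc v.1 = d.1 := hx
                _ ≤ n d.2.2 := hdxn
                _ ≤ n (v.2.2 - 1) := hnMono d.2.2 (v.2.2 - 1) hdz1 (by omega) (by omega),
           show 1 ≤ v.2.1 from hvy1,
           by simp only [upN]
              calc v.2.1 = d.2.1 := hy
                _ ≤ m d.2.2 := hdym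
                _ ≤ m (v.2.2 - 1) := hmMono d.2.2 (v.2.2 - 1) hdz1 (by omega) (by omega),
           show 1 ≤ v.2.2 - 1 by omega,
           show v.2.2 - 1 ≤ L by omega⟩
        refine ⟨upN v, hmem',
          ⟨hvmem, hmem', Or.inr (Or.inr (Or.inr (Or.inr (Or.inr
            ⟨rfl, rfl, show v.2.2 - 1 + 1 = v.2.2 by omega⟩))))⟩,
          ⟨rfl, Or.inr ⟨hne, hdz, hΦle, Or.inr (Or.inr (Or.inr (Or.inr
            ⟨hx, hy, hzgt, rfl⟩)))⟩⟩, ?_⟩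
        have hd0 : hDist (upN v) d = 0 := by
          simp only [hDist, upN, Nat.dist, hx, hy]
          omega
        have hd0' : hDist v d = 0 := by
          simp only [hDist, Nat.dist, hx, hy]
          omega
        have hP' : ¬((upN v).2.2 < d.2.2 ∨
            (d.2.2 ≤ (upN v).2.2 ∧ Φ (upN v).2.2 < (hDist (upN v) d : ℕ∞))) := by
          push_neg
          refine ⟨show d.2.2 ≤ (upN v).2.2 by simp only [upN]; omega, fun _ => ?_⟩
          rw [hd0]
          simp
        rw [mu, mu, if_neg hP', if_neg hP0, hd0, hd0']
        simp only [upN]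
        omega
      · -- north
        have hmem' : memV L m n (northN v) :=
          ⟨hvx1, hvxn, by simp only [northN]; omega, by simp only [northN]; omega, hvz1, hvzL⟩
        have hdlt : hDist (northN v) d < hDist v d := by
          simp only [hDist, northN, Nat.dist]; omega
        refine ⟨northN v, hmem', ⟨hvmem, hmem', Or.inr (Or.inr (Or.inr (Or.inl
            ⟨rfl, show v.2.1 - 1 + 1 = v.2.1 by omega, rfl⟩)))⟩,
          ⟨rfl, Or.inr ⟨hne, hdz, hΦle, Or.inr (Or.inr (Or.inl ⟨hx, hy, rfl⟩))⟩⟩, ?_⟩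
        have hP' : ¬((northN v).2.2 < d.2.2 ∨
            (d.2.2 ≤ (northN v).2.2 ∧ Φ (northN v).2.2 < (hDist (northN v) d : ℕ∞))) := by
          simp only [northN]
          push_neg
          exact ⟨hdz, fun _ => le_trans (Nat.cast_le.mpr hdlt.le) hΦle⟩
        rw [mu, mu, if_neg hP', if_neg hP0]
        simp only [northN] at hdlt ⊢
        omega
    · -- west
      have hmem' : memV L m n (westN v) :=
        ⟨by simp only [westN]; omega, by simp only [westN]; omega, hvy1, hvym, hvz1, hvzL⟩
      have hdlt : hDist (westN v) d < hDist v d := by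
        simp only [hDist, westN, Nat.dist]; omega
      refine ⟨westN v, hmem', ⟨hvmem, hmem', Or.inr (Or.inl
          ⟨show v.1 - 1 + 1 = v.1 by omega, rfl, rfl⟩)⟩,
        ⟨rfl, Or.inr ⟨hne, hdz, hΦle, Or.inr (Or.inl ⟨hx, rfl⟩)⟩⟩, ?_⟩
      have hP' : ¬((westN v).2.2 < d.2.2 ∨
          (d.2.2 ≤ (westN v).2.2 ∧ Φ (westN v).2.2 < (hDist (westN v) d : ℕ∞))) := by
        simp only [westN]
        push_neg
        exact ⟨hdz, fun _ => le_trans (Nat.cast_le.mpr hdlt.le) hΦle⟩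
      rw [mu, mu, if_neg hP', if_neg hP0]
      simp only [westN] at hdlt ⊢
      omega

/-- Lemma 4: the routing function `R2` is connected: for every pair of routers
`s, d ∈ V` there is a directed path in the topology digraph from `s` to `d`
each of whose arcs is delivered by `R2` (toward `d`). -/
theorem R2_connected (L : ℕ) (m n : ℕ → ℕ) (hL : 2 ≤ L)
    (hm2 : ∀ z, 1 ≤ z → z ≤ L → 2 ≤ m z)
    (hn2 : ∀ z, 1 ≤ z → z ≤ L → 2 ≤ n z)
    (hmMono : ∀ z, 1 ≤ z → z < L → m z ≤ m (z + 1))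
    (hnMono : ∀ z, 1 ≤ z → z < L → n z ≤ n (z + 1))
    (Lam : ℕ) (hLam1 : 1 ≤ Lam) (hLam2 : Lam ≤ L)
    (Φ : ℕ → ℕ∞)
    (hΦ : ∃ c : ℕ, (∀ z, 1 ≤ z → z < Lam → Φ z = (c : ℕ∞)) ∧
      (∀ z, Lam ≤ z → z ≤ L → Φ z = ⊤))
    (s d : Vtx) (hs : memV L m n s) (hd : memV L m n d) :
    ∃ (k : ℕ) (p : ℕ → Vtx), p 0 = s ∧ p k = d ∧
      ∀ i < k, inA L m n (p i, p (i + 1)) ∧ (p i, p (i + 1)) ∈ R2 Lam Φ (p i) d := by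
  obtain ⟨c, hc1, hc2⟩ := hΦ
  have hmM : ∀ z1 z2, 1 ≤ z1 → z1 ≤ z2 → z2 ≤ L → m z1 ≤ m z2 := by
    intro z1 z2 h1 h12 h2L
    induction z2 with
    | zero => omega
    | succ k ih =>
      rcases Nat.eq_or_lt_of_le h12 with rfl | h
      · exact le_rfl
      · exact le_trans (ih (by omega) (by omega)) (hmMono k (by omega) (by omega))
  have hnM : ∀ z1 z2, 1 ≤ z1 → z1 ≤ z2 → z2 ≤ L → n z1 ≤ n z2 := by
    intro z1 z2 h1 h12 h2L
    induction z2 with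
    | zero => omega
    | succ k ih =>
      rcases Nat.eq_or_lt_of_le h12 with rfl | h
      · exact le_rfl
      · exact le_trans (ih (by omega) (by omega)) (hnMono k (by omega) (by omega))
  suffices H : ∀ N v, mu L m n Φ d v ≤ N → memV L m n v →
      ∃ (k : ℕ) (p : ℕ → Vtx), p 0 = v ∧ p k = d ∧
        ∀ i < k, inA L m n (p i, p (i + 1)) ∧ (p i, p (i + 1)) ∈ R2 Lam Φ (p i) d by
    exact H (mu L m n Φ d s) s le_rfl hs
  intro N
  induction N with
  | zero =>
    intro v hμ hv
    by_cases hvd : v = d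
    · exact ⟨0, fun _ => v, rfl, hvd, fun i hi => by omega⟩
    · exfalso
      obtain ⟨v', _, _, _, hlt⟩ :=
        R2_step L m n hmM hnM Lam hLam2 Φ hc2 d hd v hv hvd
      omega
  | succ N ih =>
    intro v hμ hv
    by_cases hvd : v = d
    · exact ⟨0, fun _ => v, rfl, hvd, fun i hi => by omega⟩
    · obtain ⟨v', hv', hA, hR, hlt⟩ :=
        R2_step L m n hmM hnM Lam hLam2 Φ hc2 d hd v hv hvd
      obtain ⟨k, p, hp0, hpk, hstep⟩ := ih v' (by omega) hv'
      refine ⟨k + 1, fun i => if i = 0 then v else p (i - 1), by simp, by simp [hpk], ?_⟩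
      intro i hi
      rcases Nat.eq_zero_or_pos i with rfl | hipos
      · simpa [hp0] using ⟨hA, hR⟩
      · have h1 : (if i = 0 then v else p (i - 1)) = p (i - 1) := by
          simp [Nat.pos_iff_ne_zero.mp hipos]
        have h2 : (if i + 1 = 0 then v else p (i + 1 - 1)) = p i := by simp
        dsimp only
        rw [h1, h2]
        have := hstep (i - 1) (by omega)
        have hieq : i - 1 + 1 = i := by omega
        rw [hieq] at this
        exact this
end

section
/- (Theorem 4 for R2: livelock-freedom) For all s, d ∈ V, the route generated by R2 from s toward d — the sequence v_0 = s and v_{i+1} = head of the unique arc in R2(v_i, d) — reaches d after at most |s_x − d_x| + |s_y − d_y| + 2(ℓ − 1) steps; in particular every packet routed by R2 reaches its destination after finitely many hops. -/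
/-- Potential function: horizontal distance plus vertical-above excess plus
(twice) remaining possible descent budget. -/
def meas (Lam : ℕ) (d v : Vtx) : ℕ :=
  hDist v d + (v.2.2 - d.2.2) +
    (if hDist v d = 0 ∧ d.2.2 ≤ v.2.2 then 0 else 2 * (max d.2.2 Lam - v.2.2))

lemma meas_eq_zero {Lam : ℕ} {d v : Vtx} (hd1 : 1 ≤ d.2.2)
    (h : meas Lam d v = 0) : v = d := by
  have hZ : d.2.2 ≤ max d.2.2 Lam := le_max_left _ _
  unfold meas at h
  split at h <;> rename_i hc
  · have := hc.2
    obtain ⟨x1, y1, z1⟩ := v; obtain ⟨x2, y2, z2⟩ := d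
    simp_all only [Prod.mk.injEq, hDist, Nat.dist]
    omega
  · exfalso
    simp only [hDist, Nat.dist] at hc h
    omega

lemma R2_step_s14 (L Lam : ℕ) (Φ : ℕ → ℕ∞)
    (hΦtop : ∀ z, Lam ≤ z → z ≤ L → Φ z = ⊤)
    (hLam2 : Lam ≤ L) (d : Vtx) (hdL : d.2.2 ≤ L)
    (v w : Vtx) (hvL : v.2.2 ≤ L)
    (hmem : (v, w) ∈ R2 Lam Φ v d) :
    w.2.2 ≤ L ∧ meas Lam d w + 1 ≤ meas Lam d v := by
  have hZ1 : d.2.2 ≤ max d.2.2 Lam := le_max_left _ _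
  have hZ2 : Lam ≤ max d.2.2 Lam := le_max_right _ _
  have hZ3 : max d.2.2 Lam ≤ L := max_le hdL hLam2
  simp only [R2, Set.mem_setOf_eq] at hmem
  obtain ⟨-, hmem⟩ := hmem
  rcases hmem with ⟨hcond, hw⟩ | ⟨hne, hzd, hΦle, hdir⟩
  · -- down move
    subst hw
    rcases hcond with hlt | ⟨hge, hΦlt⟩
    · constructor
      · exact hlt.trans_le hdL
      · unfold meas; split <;> split <;> simp only [downN, hDist, Nat.dist] at * <;> omega
    · -- Φ-forced down: layer below Lam and hDist positive
      have hne0 : hDist v d ≠ 0 := by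
        intro h0
        rw [h0] at hΦlt
        simp at hΦlt
      have hnet : Φ v.2.2 ≠ ⊤ := ne_top_of_lt hΦlt
      have hzLam : v.2.2 < Lam := by
        by_contra hge'
        push_neg at hge'
        exact hnet (hΦtop _ hge' hvL)
      constructor
      · exact Nat.succ_le_of_lt (hzLam.trans_le hLam2)
      · unfold meas; split <;> split <;> simp only [downN, hDist, Nat.dist] at * <;> omega
  · rcases hdir with ⟨hx, hw⟩ | ⟨hx, hw⟩ | ⟨hx, hy, hw⟩ | ⟨hx, hy, hw⟩ | ⟨hx, hy, hz, hw⟩ <;>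
      subst hw
    · exact ⟨hvL, by unfold meas; split <;> split <;> simp only [eastN, hDist, Nat.dist] at * <;> omega⟩
    · exact ⟨hvL, by unfold meas; split <;> split <;> simp only [westN, hDist, Nat.dist] at * <;> omega⟩
    · exact ⟨hvL, by
        unfold meas; split <;> split <;> simp only [northN, hDist, Nat.dist] at * <;> omega⟩
    · exact ⟨hvL, by
        unfold meas; split <;> split <;> simp only [southN, hDist, Nat.dist] at * <;> omega⟩
    · refine ⟨le_trans (Nat.sub_le _ _) hvL, ?_⟩
      unfold meas; split <;> split <;> simp only [upN, hDist, Nat.dist] at * <;> omega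

/-- Theorem 4 for `R2` (livelock freedom): the route generated by `R2` from
`s` toward `d` reaches `d` after at most
`|s_x − d_x| + |s_y − d_y| + 2(L − 1)` steps. -/
theorem R2_livelock_free (L : ℕ) (m n : ℕ → ℕ) (hL : 2 ≤ L)
    (hm2 : ∀ z, 1 ≤ z → z ≤ L → 2 ≤ m z)
    (hn2 : ∀ z, 1 ≤ z → z ≤ L → 2 ≤ n z)
    (hmMono : ∀ z, 1 ≤ z → z < L → m z ≤ m (z + 1))
    (hnMono : ∀ z, 1 ≤ z → z < L → n z ≤ n (z + 1))
    (Lam : ℕ) (hLam1 : 1 ≤ Lam) (hLam2 : Lam ≤ L)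
    (Φ : ℕ → ℕ∞)
    (hΦ : ∃ c : ℕ, (∀ z, 1 ≤ z → z < Lam → Φ z = (c : ℕ∞)) ∧
      (∀ z, Lam ≤ z → z ≤ L → Φ z = ⊤))
    (s d : Vtx) (hs : memV L m n s) (hd : memV L m n d)
    (p : ℕ → Vtx) (hp0 : p 0 = s)
    (hstep : ∀ i, p i ≠ d → (p i, p (i + 1)) ∈ R2 Lam Φ (p i) d) :
    ∃ k, k ≤ hDist s d + 2 * (L - 1) ∧ p k = d := by
  obtain ⟨c, hΦc, hΦtop⟩ := hΦ
  have hd1 : 1 ≤ d.2.2 := hd.2.2.2.2.1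
  have hdL : d.2.2 ≤ L := hd.2.2.2.2.2
  have hs1 : 1 ≤ s.2.2 := hs.2.2.2.2.1
  have hsL : s.2.2 ≤ L := hs.2.2.2.2.2
  have key : ∀ i, (∀ j, j ≤ i → p j ≠ d) →
      (p i).2.2 ≤ L ∧ meas Lam d (p i) + i ≤ meas Lam d s := by
    intro i
    induction i with
    | zero => intro _; rw [hp0]; exact ⟨hsL, le_rfl⟩
    | succ i ih =>
      intro h
      have h' : ∀ j, j ≤ i → p j ≠ d := fun j hj => h j (hj.trans (Nat.le_succ i))
      obtain ⟨hzL, hM⟩ := ih h'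
      have hstepi := hstep i (h' i le_rfl)
      obtain ⟨hwL, hdec⟩ := R2_step_s14 L Lam Φ hΦtop hLam2 d hdL (p i) (p (i + 1)) hzL hstepi
      exact ⟨hwL, by omega⟩
  have hbound : meas Lam d s ≤ hDist s d + 2 * (L - 1) := by
    have hZ1 : d.2.2 ≤ max d.2.2 Lam := le_max_left _ _
    have hZ3 : max d.2.2 Lam ≤ L := max_le hdL hLam2
    simp only [meas]
    split_ifs <;> omega
  by_cases hex : ∃ j, j ≤ meas Lam d s ∧ p j = d
  · obtain ⟨j, hj, hpj⟩ := hex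
    exact ⟨j, hj.trans hbound, hpj⟩
  · exfalso
    push_neg at hex
    obtain ⟨-, hM⟩ := key (meas Lam d s) (fun j hj => hex j hj)
    have h0 : meas Lam d (p (meas Lam d s)) = 0 := by omega
    exact hex (meas Lam d s) le_rfl (meas_eq_zero hd1 h0)
end

section
/- (Monotonicity along R1 routes, Cases 3 and 4 of the livelock proof) Along the route generated by R1 from any source s toward any destination d, the horizontal distances are monotone: for every step from v to w one has |w_x − d_x| ≤ |v_x − d_x| and |w_y − d_y| ≤ |v_y − d_y|; in particular, once the route reaches a router with x-coordinate equal to d_x it never leaves that column, so the route never takes both an east step and a west step, and likewise never takes both a north step and a south step. -/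
lemma abs_step_aux {a b c : ℕ}
    (h : a = b ∨ (b < c ∧ a = b + 1) ∨ (c < b ∧ a + 1 = b)) :
    |(a : ℤ) - (c : ℤ)| ≤ |(b : ℤ) - (c : ℤ)| := by
  have h1 := le_abs_self ((b : ℤ) - (c : ℤ))
  have h2 := neg_le_abs ((b : ℤ) - (c : ℤ))
  rw [abs_le]
  set t := |(b : ℤ) - (c : ℤ)| with ht
  omega

/-- Monotonicity along `R1` routes (Cases 3 and 4 of the livelock proof): the
horizontal distances to the destination never increase along a route; once the route
reaches the destination column it never leaves it; and a route never takes both an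
east step and a west step, nor both a north step and a south step. -/
theorem R1_route_monotone (L : ℕ) (m n : ℕ → ℕ) (hL : 2 ≤ L)
    (hm2 : ∀ z, 1 ≤ z → z ≤ L → 2 ≤ m z)
    (hn2 : ∀ z, 1 ≤ z → z ≤ L → 2 ≤ n z)
    (hmMono : ∀ z, 1 ≤ z → z < L → m z ≤ m (z + 1))
    (hnMono : ∀ z, 1 ≤ z → z < L → n z ≤ n (z + 1))
    (s d : Vtx) (hs : memV L m n s) (hd : memV L m n d)
    (p : ℕ → Vtx) (hp0 : p 0 = s)
    (hstep : ∀ i, p i ≠ d → (p i, p (i + 1)) ∈ R1 (p i) d)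
    (hstay : ∀ i, p i = d → p (i + 1) = p i) :
    (∀ i, |((p (i + 1)).1 : ℤ) - (d.1 : ℤ)| ≤ |((p i).1 : ℤ) - (d.1 : ℤ)| ∧
          |((p (i + 1)).2.1 : ℤ) - (d.2.1 : ℤ)| ≤ |((p i).2.1 : ℤ) - (d.2.1 : ℤ)|) ∧
    (∀ i j, i ≤ j → (p i).1 = d.1 → (p j).1 = d.1) ∧
    ¬((∃ i, (p (i + 1)).1 = (p i).1 + 1) ∧ (∃ j, (p (j + 1)).1 + 1 = (p j).1)) ∧
    ¬((∃ i, (p (i + 1)).2.1 + 1 = (p i).2.1) ∧ (∃ j, (p (j + 1)).2.1 = (p j).2.1 + 1)) := by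
  have key : ∀ i,
      ((p (i+1)).1 = (p i).1 ∧ (p (i+1)).2.1 = (p i).2.1) ∨
      ((p i).1 < d.1 ∧ (p (i+1)).1 = (p i).1 + 1 ∧ (p (i+1)).2.1 = (p i).2.1) ∨
      (d.1 < (p i).1 ∧ (p (i+1)).1 + 1 = (p i).1 ∧ (p (i+1)).2.1 = (p i).2.1) ∨
      ((p (i+1)).1 = (p i).1 ∧ (p i).2.1 < d.2.1 ∧ (p (i+1)).2.1 = (p i).2.1 + 1) ∨
      ((p (i+1)).1 = (p i).1 ∧ d.2.1 < (p i).2.1 ∧ (p (i+1)).2.1 + 1 = (p i).2.1) := by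
    intro i
    by_cases h : p i = d
    · left; rw [hstay i h]; exact ⟨rfl, rfl⟩
    · have hmem := hstep i h
      simp only [R1, Set.mem_setOf_eq] at hmem
      obtain ⟨-, hcase⟩ := hmem
      rcases hcase with ⟨hx, hy, hz, he⟩ | ⟨hx, hz, he⟩ | ⟨hx, hy, hz, he⟩ |
        ⟨hx, hz, he⟩ | ⟨hx, hy, hz, he⟩ | ⟨hz, he⟩ <;>
        rw [he] <;> simp [northN, eastN, southN, westN, upN, downN] <;> omega
  have mono_le : ∀ i j, i ≤ j → (p i).1 ≤ d.1 → (p j).1 ≤ d.1 := by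
    intro i j hij h
    induction j, hij using Nat.le_induction with
    | base => exact h
    | succ j hij ih => rcases key j with h' | h' | h' | h' | h' <;> omega
  have mono_ge : ∀ i j, i ≤ j → d.1 ≤ (p i).1 → d.1 ≤ (p j).1 := by
    intro i j hij h
    induction j, hij using Nat.le_induction with
    | base => exact h
    | succ j hij ih => rcases key j with h' | h' | h' | h' | h' <;> omega
  have mono_leY : ∀ i j, i ≤ j → (p i).2.1 ≤ d.2.1 → (p j).2.1 ≤ d.2.1 := by
    intro i j hij h
    induction j, hij using Nat.le_induction with
    | base => exact h
    | succ j hij ih => rcases key j with h' | h' | h' | h' | h' <;> omega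
  have mono_geY : ∀ i j, i ≤ j → d.2.1 ≤ (p i).2.1 → d.2.1 ≤ (p j).2.1 := by
    intro i j hij h
    induction j, hij using Nat.le_induction with
    | base => exact h
    | succ j hij ih => rcases key j with h' | h' | h' | h' | h' <;> omega
  refine ⟨?_, ?_, ?_, ?_⟩
  · intro i
    constructor
    · apply abs_step_aux
      rcases key i with h' | h' | h' | h' | h' <;> omega
    · apply abs_step_aux
      rcases key i with h' | h' | h' | h' | h' <;> omega
  · intro i j hij h
    induction j, hij using Nat.le_induction with
    | base => exact h
    | succ j hij ih => rcases key j with h' | h' | h' | h' | h' <;> omega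
  · rintro ⟨⟨i, hi⟩, ⟨j, hj⟩⟩
    have hi' : (p i).1 < d.1 ∧ (p (i+1)).1 ≤ d.1 := by
      rcases key i with h' | h' | h' | h' | h' <;> omega
    have hj' : d.1 < (p j).1 ∧ d.1 ≤ (p (j+1)).1 := by
      rcases key j with h' | h' | h' | h' | h' <;> omega
    rcases lt_trichotomy i j with h | h | h
    · have := mono_le (i+1) j (by omega) hi'.2; omega
    · subst h; omega
    · have := mono_ge (j+1) i (by omega) hj'.2; omega
  · rintro ⟨⟨i, hi⟩, ⟨j, hj⟩⟩
    have hi' : d.2.1 < (p i).2.1 ∧ d.2.1 ≤ (p (i+1)).2.1 := by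
      rcases key i with h' | h' | h' | h' | h' <;> omega
    have hj' : (p j).2.1 < d.2.1 ∧ (p (j+1)).2.1 ≤ d.2.1 := by
      rcases key j with h' | h' | h' | h' | h' <;> omega
    rcases lt_trichotomy i j with h | h | h
    · have := mono_geY (i+1) j (by omega) hi'.2; omega
    · subst h; omega
    · have := mono_leY (j+1) i (by omega) hj'.2; omega
end
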